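/- arXiv:2601.18474 — 8 statements merged into one kernel-verified Lean document; each statement's English description precedes it below -/
import Mathlib

section
/- For every natural number j, there exists a nonzero rational number a such that the (2j)-th iterated derivative at 0 of the function t ↦ Γ(1 + t) · Γ(1 − t) equals a · π^(2j); moreover, every odd-order iterated derivative of this function at 0 vanishes. -/
open Real

namespace GammaReflTaylor

open PowerSeries Finset Nat



noncomputable def dq (n : ℕ) : ℚ := (2 - 2 ^ n) * bernoulli n / n.factorial

noncomputable def sq (m : ℕ) : ℚ := (1 - (-1) ^ m) / 2 / m.factorial

local notation "B" => bernoulliPowerSeries ℚ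
local notation "E" => PowerSeries.exp ℚ

lemma key1 : rescale (2 : ℚ) B * (E ^ 2 - 1) = PowerSeries.C (R := ℚ) 2 * X := by
  have h := bernoulliPowerSeries_mul_exp_sub_one ℚ
  have h2 := congrArg (rescale (2 : ℚ)) h
  rw [map_mul, map_sub, map_one, rescale_X] at h2
  rw [exp_pow_eq_rescale_exp]
  convert h2 using 3
  norm_num

lemma E_sub_one_ne : (E - 1 : PowerSeries ℚ) ≠ 0 := by
  intro h
  have := congrArg (PowerSeries.coeff 1) h
  simp [coeff_exp] at this

lemma key2 : rescale (2 : ℚ) B * E = 2 * B - rescale 2 B := by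
  have hB := bernoulliPowerSeries_mul_exp_sub_one ℚ
  have h1 := key1
  apply mul_right_cancel₀ E_sub_one_ne
  have h2X : (PowerSeries.C (R := ℚ) 2) * X = 2 * B * (E - 1) := by rw [map_ofNat, ← hB]; ring
  calc rescale (2:ℚ) B * E * (E - 1)
      = rescale (2:ℚ) B * (E ^ 2 - 1) - rescale (2:ℚ) B * (E - 1) := by ring
    _ = 2 * B * (E - 1) - rescale (2:ℚ) B * (E - 1) := by rw [key1, h2X]
    _ = (2 * B - rescale 2 B) * (E - 1) := by ring

lemma key3 : (2 * B - rescale 2 B) * (E - PowerSeries.evalNegHom E) = PowerSeries.C (R := ℚ) 2 * X := by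
  rw [← key2]
  have hinv : E * PowerSeries.evalNegHom E = 1 := exp_mul_exp_neg_eq_one
  calc rescale (2:ℚ) B * E * (E - PowerSeries.evalNegHom E)
      = rescale (2:ℚ) B * (E ^ 2 - 1) + rescale (2:ℚ) B * (1 - E * PowerSeries.evalNegHom E) := by ring
    _ = PowerSeries.C (R := ℚ) 2 * X := by rw [key1, hinv]; ring

lemma coeff_D (n : ℕ) : PowerSeries.coeff n (2 * B - rescale 2 B) = dq n := by
  rw [map_sub, coeff_rescale]
  have : PowerSeries.coeff n (2 * B) = 2 * PowerSeries.coeff n B := by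
    rw [show (2 : PowerSeries ℚ) = PowerSeries.C (R := ℚ) 2 from (map_ofNat (PowerSeries.C (R := ℚ)) 2).symm, coeff_C_mul]
  rw [this, bernoulliPowerSeries, coeff_mk]
  simp only [Algebra.algebraMap_self, RingHom.id_apply, dq]
  ring

lemma coeff_S (m : ℕ) : PowerSeries.coeff m (E - PowerSeries.evalNegHom E) = 2 * sq m := by
  rw [map_sub, PowerSeries.evalNegHom, coeff_rescale, coeff_exp]
  simp only [Algebra.algebraMap_self, RingHom.id_apply, sq]
  ring

lemma qconv (n : ℕ) : ∑ k ∈ range (n + 1), dq k * (2 * sq (n - k)) =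
    if n = 1 then 2 else 0 := by
  have h := congrArg (PowerSeries.coeff n) key3
  rw [PowerSeries.coeff_mul, coeff_C_mul, PowerSeries.coeff_X] at h
  rw [Finset.Nat.sum_antidiagonal_eq_sum_range_succ (fun k m => (PowerSeries.coeff k) (2 * B - rescale 2 B) * (PowerSeries.coeff m) (E - PowerSeries.evalNegHom E))] at h
  simp only [coeff_D, coeff_S] at h
  rw [h]
  split <;> norm_num





noncomputable def cR (n : ℕ) : ℝ := (((-1 : ℚ) ^ (n / 2) * dq n : ℚ) : ℝ) * π ^ n

lemma dq_odd {n : ℕ} (hn : Odd n) : dq n = 0 := by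
  rcases eq_or_ne n 1 with rfl | h1
  · simp [dq]
  · have : bernoulli n = 0 := by
      rw [bernoulli_eq_bernoulli'_of_ne_one h1]
      exact bernoulli'_eq_zero_of_odd hn (by rcases hn with ⟨k, rfl⟩; omega)
    simp [dq, this]

lemma zeta_ge_one {j : ℕ} (hj : j ≠ 0) :
    (1 : ℝ) ≤ (-1 : ℝ) ^ (j + 1) * (2 : ℝ) ^ (2 * j - 1) * π ^ (2 * j) *
      ((bernoulli (2 * j) : ℚ) : ℝ) / (2 * j)! := by
  have h := hasSum_zeta_nat hj
  have h1 := le_hasSum h 1 (fun i _ => by positivity)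
  simpa using h1

lemma zeta_le_two {j : ℕ} (hj : j ≠ 0) :
    (-1 : ℝ) ^ (j + 1) * (2 : ℝ) ^ (2 * j - 1) * π ^ (2 * j) *
      ((bernoulli (2 * j) : ℚ) : ℝ) / (2 * j)! ≤ 2 := by
  have h := hasSum_zeta_nat hj
  have h2 := hasSum_zeta_two
  have hle := hasSum_le (fun n => ?_) h h2
  · have hpi : π < 3.15 := pi_lt_d2
    have hpi0 : 0 < π := pi_pos
    nlinarith
  · rcases Nat.eq_zero_or_pos n with rfl | hn
    · simp [zero_pow, hj, Nat.mul_ne_zero two_ne_zero hj]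
    · have hn1 : (1 : ℝ) ≤ (n : ℝ) := by exact_mod_cast hn
      have : (n : ℝ) ^ 2 ≤ (n : ℝ) ^ (2 * j) :=
        pow_le_pow_right₀ hn1 (by omega)
      have h2p : (0 : ℝ) < (n : ℝ) ^ 2 := by positivity
      exact one_div_le_one_div_of_le h2p this

lemma bernoulli_two_mul_ne_zero {j : ℕ} (hj : j ≠ 0) : bernoulli (2 * j) ≠ 0 := by
  intro h
  have := zeta_ge_one hj
  rw [h] at this
  norm_num at this

lemma abs_cR_le (n : ℕ) : |cR n| ≤ 4 := by
  have hpi0 : (0 : ℝ) < π := pi_pos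
  have habs : |cR n| = |(dq n : ℝ)| * π ^ n := by
    rw [cR]
    push_cast
    rw [abs_mul, abs_mul, abs_pow, abs_pow]
    simp [abs_of_pos hpi0]
  rcases Nat.even_or_odd n with he | ho
  · rcases he with ⟨j, rfl⟩
    rcases eq_or_ne j 0 with rfl | hj
    · simp [habs, dq]; norm_num
    · have h2j : j + j = 2 * j := by ring
      rw [h2j] at habs ⊢
      have hZ := zeta_le_two hj
      have hZ1 := zeta_ge_one hj
      -- |bernoulli (2j)| * 2^(2j-1) * π^(2j) / (2j)! ≤ 2
      set b : ℝ := ((bernoulli (2 * j) : ℚ) : ℝ) with hb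
      have hP : (0:ℝ) < 2^(2*j-1) * π^(2*j) / (2*j)! := by positivity
      have hZ1' : (1:ℝ) ≤ ((-1:ℝ)^(j+1) * b) * (2^(2*j-1) * π^(2*j) / (2*j)!) := by
        calc (1:ℝ) ≤ _ := hZ1
          _ = ((-1:ℝ)^(j+1) * b) * (2^(2*j-1) * π^(2*j) / (2*j)!) := by ring
      have hnn : 0 ≤ (-1:ℝ)^(j+1) * b := by nlinarith
      have hsign : (-1:ℝ)^(j+1) * b = |b| := by
        rw [← abs_of_nonneg hnn, abs_mul, abs_pow, abs_neg, abs_one, one_pow, one_mul]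
      have hA : |b| * ((2:ℝ) ^ (2*j-1) * π ^ (2*j) / (2*j)!) ≤ 2 := by
        calc |b| * ((2:ℝ) ^ (2*j-1) * π ^ (2*j) / (2*j)!)
            = (-1:ℝ)^(j+1) * (2:ℝ)^(2*j-1) * π^(2*j) * b / (2*j)! := by rw [← hsign]; ring
          _ ≤ 2 := hZ
      have hdq : |(dq (2*j) : ℝ)| = |(2:ℝ) - 2^(2*j)| * |b| / (2*j)! := by
        rw [dq]
        push_cast
        rw [abs_div, abs_mul, Nat.abs_cast]
      have h2bound : |(2:ℝ) - 2^(2*j)| ≤ 2^(2*j) := by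
        have h4 : (4:ℝ) ≤ 2^(2*j) := by
          calc (4:ℝ) = 2^2 := by norm_num
          _ ≤ 2^(2*j) := pow_le_pow_right₀ (by norm_num) (by omega)
        rw [abs_of_nonpos (by linarith)]
        linarith
      have hpow : (2:ℝ)^(2*j) = 2 * 2^(2*j-1) := by
        rw [← _root_.pow_succ']
        congr 1
        omega
      rw [habs, hdq]
      have hfac : (0:ℝ) < (2*j)! := by positivity
      have hbpos : 0 ≤ |b| := abs_nonneg b
      have hppos : 0 < π ^ (2*j) := pow_pos hpi0 _
      calc |(2:ℝ) - 2^(2*j)| * |b| / (2*j)! * π^(2*j)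
          ≤ 2^(2*j) * |b| / (2*j)! * π^(2*j) := by gcongr
        _ = 2 * (|b| * ((2:ℝ)^(2*j-1) * π^(2*j) / (2*j)!)) := by rw [hpow]; ring
        _ ≤ 2 * 2 := by linarith
        _ = 4 := by norm_num
  · rw [habs, dq_odd ho]
    norm_num




noncomputable def sR (m : ℕ) : ℝ := (((-1 : ℚ) ^ (m / 2) * sq m : ℚ) : ℝ) * π ^ m


lemma sq_even {m : ℕ} (hm : Even m) : sq m = 0 := by
  rw [sq, Even.neg_one_pow hm]
  norm_num

lemma sq_odd {m : ℕ} (hm : Odd m) : sq m = 1 / m.factorial := by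
  rw [sq, Odd.neg_one_pow hm]
  norm_num

lemma hasSum_sin_series (t : ℝ) :
    HasSum (fun m => sR m * t ^ m) (Real.sin (π * t)) := by
  have hinj : Function.Injective (fun k : ℕ => 2 * k + 1) := fun a b h => by simp only [] at h; omega
  have h0 : ∀ m ∉ Set.range (fun k : ℕ => 2 * k + 1), sR m * t ^ m = 0 := by
    intro m hm
    have hme : Even m := by
      rcases Nat.even_or_odd m with h | h
      · exact h
      · exact absurd (by rcases h with ⟨k, hk⟩; exact ⟨k, show 2 * k + 1 = m by omega⟩) hm
    simp [sR, sq_even hme]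
  rw [← Function.Injective.hasSum_iff hinj h0]
  have h := Real.hasSum_sin (π * t)
  convert h using 2 with k
  have hdiv : (2 * k + 1) / 2 = k := by omega
  have hsq : sq (2 * k + 1) = 1 / (2 * k + 1).factorial := sq_odd ⟨k, by omega⟩
  simp only [Function.comp, sR, hsq, hdiv]
  push_cast
  rw [mul_pow]
  ring

lemma summable_norm_sR (t : ℝ) : Summable fun m => ‖sR m * t ^ m‖ := by
  apply Summable.of_nonneg_of_le (fun m => norm_nonneg _) (fun m => ?_)
    (Real.summable_pow_div_factorial (π * |t|))
  have habs : |sq m| ≤ 1 / m.factorial := by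
    rcases Nat.even_or_odd m with h | h
    · rw [sq_even h]; positivity
    · rw [sq_odd h, abs_of_nonneg (by positivity)]
  rw [norm_mul, norm_pow, Real.norm_eq_abs, Real.norm_eq_abs]
  rw [mul_pow, div_eq_mul_one_div]
  have h1 : |sR m| ≤ π ^ m * (1 / m.factorial) := by
    rw [sR, abs_mul, abs_pow, abs_of_pos pi_pos]
    rw [mul_comm (π ^ m)]
    apply mul_le_mul_of_nonneg_right _ (by positivity)
    push_cast
    rw [abs_mul, abs_pow, abs_neg, abs_one, one_pow, one_mul]
    have h' : ((|sq m| : ℚ) : ℝ) ≤ (((1 : ℚ) / m.factorial : ℚ) : ℝ) := by exact_mod_cast habs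
    push_cast at h'
    convert h' using 2
  calc |sR m| * |t| ^ m ≤ π ^ m * (1 / m.factorial) * |t| ^ m := by
        apply mul_le_mul_of_nonneg_right h1 (by positivity)
    _ = π ^ m * |t| ^ m * (1 / m.factorial) := by ring

lemma summable_norm_cR {t : ℝ} (h : |t| < 1) : Summable fun n => ‖cR n * t ^ n‖ := by
  apply Summable.of_nonneg_of_le (fun n => norm_nonneg _) (fun n => ?_)
    ((summable_geometric_of_lt_one (abs_nonneg t) h).mul_left 4)
  rw [norm_mul, norm_pow, Real.norm_eq_abs, Real.norm_eq_abs]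
  exact mul_le_mul_of_nonneg_right (abs_cR_le n) (by positivity)

noncomputable def p : FormalMultilinearSeries ℝ ℝ ℝ := FormalMultilinearSeries.ofScalars ℝ cR

lemma one_le_radius : 1 ≤ p.radius := by
  apply FormalMultilinearSeries.le_radius_of_bound _ 4 (fun n => ?_)
  rw [p, FormalMultilinearSeries.ofScalars_norm]
  simp only [NNReal.coe_one, one_pow, mul_one, Real.norm_eq_abs]
  exact abs_cR_le n

lemma hasSum_cR {t : ℝ} (h : |t| < 1) : HasSum (fun n => cR n * t ^ n) (p.sum t) := by
  have hmem : t ∈ Metric.eball (0 : ℝ) p.radius := by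
    rw [Metric.mem_eball, edist_zero_right]
    apply lt_of_lt_of_le _ one_le_radius
    rw [← ENNReal.coe_one, enorm_eq_nnnorm, ENNReal.coe_lt_coe, ← NNReal.coe_lt_coe]
    simpa [Real.norm_eq_abs] using h
  have hs := p.hasSum hmem
  convert hs using 2 with n
  · rfl
  rw [p, FormalMultilinearSeries.ofScalars_apply_eq, smul_eq_mul]

lemma conv (n : ℕ) : ∑ k ∈ range (n + 1), cR k * sR (n - k) = if n = 1 then π else 0 := by
  have hterm : ∀ k ∈ range (n + 1), cR k * sR (n - k)
      = (((-1 : ℚ) ^ (n / 2) * (dq k * sq (n - k)) : ℚ) : ℝ) * π ^ n := by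
    intro k hk
    rw [mem_range] at hk
    have hkn : k ≤ n := by omega
    rcases Nat.even_or_odd k with hke | hko
    · rcases Nat.even_or_odd (n - k) with hme | hmo
      · simp [sR, cR, sq_even hme]
      · have hsplit : k / 2 + (n - k) / 2 = n / 2 := by
          obtain ⟨a, rfl⟩ := hke
          omega
        have h1 : (-1 : ℝ) ^ (n / 2) = (-1) ^ (k / 2) * (-1) ^ ((n - k) / 2) := by
          rw [← pow_add, hsplit]
        have h2 : (π : ℝ) ^ n = π ^ k * π ^ (n - k) := by
          rw [← pow_add, Nat.add_sub_cancel' hkn]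
        rw [cR, sR]
        push_cast
        rw [h1, h2]
        ring
    · simp [cR, dq_odd hko]
  rw [Finset.sum_congr rfl hterm, ← Finset.sum_mul, ← Rat.cast_sum]
  have hq : ∑ k ∈ range (n + 1), (-1 : ℚ) ^ (n / 2) * (dq k * sq (n - k)) =
      if n = 1 then 1 else 0 := by
    rw [← Finset.mul_sum]
    have h2 : ∑ k ∈ range (n + 1), dq k * sq (n - k) = if n = 1 then 1 else 0 := by
      have h := qconv n
      have heq : ∑ k ∈ range (n + 1), dq k * (2 * sq (n - k)) =
          2 * ∑ k ∈ range (n + 1), dq k * sq (n - k) := by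
        rw [Finset.mul_sum]
        exact Finset.sum_congr rfl (fun k _ => by ring)
      rw [heq] at h
      split
      · rename_i h1
        rw [h1] at h ⊢
        simp at h
        linarith
      · rename_i h1
        rw [if_neg h1] at h
        linarith
    rw [h2]
    split
    · rename_i h1
      rw [h1]
      norm_num
    · ring
  rw [hq]
  split
  · rename_i h1
    rw [h1]
    norm_num
  · norm_num

lemma sum_mul_sin {t : ℝ} (h : |t| < 1) : p.sum t * Real.sin (π * t) = π * t := by
  have hf := hasSum_cR h
  have hs := hasSum_sin_series t
  have hC := hasSum_sum_range_mul_of_summable_norm (summable_norm_cR h) (summable_norm_sR t)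
  rw [hf.tsum_eq, hs.tsum_eq] at hC
  have hCn : ∀ n : ℕ, (∑ k ∈ range (n + 1), (cR k * t ^ k) * (sR (n - k) * t ^ (n - k)))
      = (if n = 1 then π * t else 0) := by
    intro n
    have : ∀ k ∈ range (n + 1), (cR k * t ^ k) * (sR (n - k) * t ^ (n - k))
        = (cR k * sR (n - k)) * t ^ n := by
      intro k hk
      rw [mem_range] at hk
      rw [show t ^ n = t ^ k * t ^ (n - k) by rw [← pow_add, Nat.add_sub_cancel' (by omega)]]
      ring
    rw [Finset.sum_congr rfl this, ← Finset.sum_mul, conv]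
    split
    · rename_i h1; rw [h1]; ring
    · ring
  rw [funext hCn] at hC
  exact hC.unique (hasSum_ite_eq 1 (π * t))






lemma cR_zero : cR 0 = 1 := by
  rw [cR, dq]
  norm_num

lemma p_sum_zero : p.sum 0 = 1 := by
  have h := hasSum_cR (t := 0) (by norm_num)
  have h2 : (fun n => cR n * (0:ℝ) ^ n) = fun n => if n = 0 then 1 else 0 := by
    funext n
    rcases eq_or_ne n 0 with rfl | hn
    · simp [cR_zero]
    · simp [zero_pow hn, hn]
  rw [h2] at h
  exact h.unique (hasSum_ite_eq 0 1)

lemma sin_pi_mul_ne_zero {t : ℝ} (ht0 : t ≠ 0) (h : |t| < 1) : Real.sin (π * t) ≠ 0 := by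
  have hpi := pi_pos
  rcases lt_or_gt_of_ne ht0 with hneg | hpos
  · have h1 : (0:ℝ) < π * (-t) := by nlinarith
    have h2 : π * (-t) < π := by
      have : -t < 1 := by rw [abs_of_neg hneg] at h; linarith
      nlinarith
    have := Real.sin_pos_of_pos_of_lt_pi h1 h2
    rw [show π * t = -(π * (-t)) by ring, Real.sin_neg]
    exact neg_ne_zero.mpr (ne_of_gt this)
  · have h1 : (0:ℝ) < π * t := by nlinarith
    have h2 : π * t < π := by
      have : t < 1 := by rw [abs_of_pos hpos] at h; linarith
      nlinarith
    exact ne_of_gt (Real.sin_pos_of_pos_of_lt_pi h1 h2)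

lemma f_eventuallyEq :
    (fun t : ℝ => Real.Gamma (1 + t) * Real.Gamma (1 - t)) =ᶠ[nhds (0:ℝ)] p.sum := by
  filter_upwards [Metric.ball_mem_nhds (0:ℝ) (by norm_num : (0:ℝ) < 1/2)] with t ht
  have habs : |t| < 1/2 := by simpa [Real.dist_eq] using ht
  rcases eq_or_ne t 0 with rfl | ht0
  · simp only [add_zero, sub_zero, Real.Gamma_one, mul_one, p_sum_zero]
  · have h1lt : |t| < 1 := by linarith
    have hsin := sin_pi_mul_ne_zero ht0 h1lt
    have h1 : Real.Gamma (1 + t) = t * Real.Gamma t := by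
      rw [add_comm]; exact Real.Gamma_add_one ht0
    have h2 : Real.Gamma t * Real.Gamma (1 - t) = π / Real.sin (π * t) :=
      Real.Gamma_mul_Gamma_one_sub t
    have h3 := sum_mul_sin h1lt
    have h4 : p.sum t = π * t / Real.sin (π * t) := by
      rw [eq_div_iff hsin]; exact h3
    rw [h1, mul_assoc, h2, h4]
    field_simp

lemma iterated (n : ℕ) :
    iteratedDeriv n (fun t : ℝ => Real.Gamma (1 + t) * Real.Gamma (1 - t)) 0
      = (n.factorial : ℝ) * cR n := by
  rw [f_eventuallyEq.iteratedDeriv_eq n]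
  have hpos : 0 < p.radius := lt_of_lt_of_le zero_lt_one one_le_radius
  have hball := p.hasFPowerSeriesOnBall hpos
  have h := hball.factorial_smul (1 : ℝ) n
  rw [iteratedDeriv_eq_iteratedFDeriv, ← h, p, FormalMultilinearSeries.ofScalars_apply_eq]
  simp [smul_eq_mul]

theorem main (j : ℕ) :
    (∃ a : ℚ, a ≠ 0 ∧
      iteratedDeriv (2 * j) (fun t : ℝ => Real.Gamma (1 + t) * Real.Gamma (1 - t)) 0 =
        (a : ℝ) * π ^ (2 * j)) ∧
    (∀ n : ℕ, Odd n →
      iteratedDeriv n (fun t : ℝ => Real.Gamma (1 + t) * Real.Gamma (1 - t)) 0 = 0) := by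
  constructor
  · refine ⟨((2*j).factorial : ℚ) * ((-1)^j * dq (2*j)), ?_, ?_⟩
    · have hfac : ((2*j).factorial : ℚ) ≠ 0 := by
        exact_mod_cast (Nat.factorial_ne_zero (2*j))
      have hdq : dq (2*j) ≠ 0 := by
        rcases eq_or_ne j 0 with rfl | hj
        · rw [dq]; norm_num
        · rw [dq]
          apply div_ne_zero
          · apply mul_ne_zero
            · have h4 : (4:ℚ) ≤ 2^(2*j) := by
                calc (4:ℚ) = 2^2 := by norm_num
                _ ≤ 2^(2*j) := by
                  apply pow_le_pow_right₀ (by norm_num)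
                  omega
              intro hc
              rw [sub_eq_zero] at hc
              rw [← hc] at h4
              norm_num at h4
            · exact bernoulli_two_mul_ne_zero hj
          · exact_mod_cast (Nat.factorial_ne_zero (2*j))
      exact mul_ne_zero hfac (mul_ne_zero (pow_ne_zero _ (by norm_num)) hdq)
    · rw [iterated (2*j), cR]
      have hdiv : 2 * j / 2 = j := by omega
      rw [hdiv]
      push_cast
      ring
  · intro n hn
    rw [iterated n, cR, dq_odd hn]
    simp


end GammaReflTaylor

/-- The Taylor coefficients of `Γ(1+t)Γ(1−t) = πt / sin(πt)` at `t = 0`: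
the `(2j)`-th derivative at `0` is a nonzero rational multiple of `π^(2j)`,
and every odd-order derivative at `0` vanishes. -/
theorem iteratedDeriv_Gamma_one_add_mul_Gamma_one_sub (j : ℕ) :
    (∃ a : ℚ, a ≠ 0 ∧
      iteratedDeriv (2 * j) (fun t : ℝ => Real.Gamma (1 + t) * Real.Gamma (1 - t)) 0 =
        (a : ℝ) * π ^ (2 * j)) ∧
    (∀ n : ℕ, Odd n →
      iteratedDeriv n (fun t : ℝ => Real.Gamma (1 + t) * Real.Gamma (1 - t)) 0 = 0) :=
  GammaReflTaylor.main j
end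

section
/- For every natural number j, there exists a nonzero rational number a such that the (2j)-th iterated derivative at 0 of the function t ↦ Γ(1/2 + t) · Γ(1/2 − t) equals a · π^(2j+1); moreover, every odd-order iterated derivative of this function at 0 vanishes. -/
open Real

open Polynomial Filter

noncomputable def secP : ℕ → Polynomial ℤ
  | 0 => 1
  | n + 1 => X * secP n + (1 + X ^ 2) * (secP n).derivative

lemma secP_coeff_succ (n k : ℕ) : (secP (n + 1)).coeff k =
    (if k = 0 then 0 else (secP n).coeff (k - 1)) +
      ((secP n).coeff (k + 1) * (k + 1) +
        if 2 ≤ k then (secP n).coeff (k - 1) * ((k : ℤ) - 1) else 0) := by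
  show (X * secP n + (1 + X ^ 2) * (secP n).derivative).coeff k = _
  rw [coeff_add, add_mul, one_mul, coeff_add, coeff_derivative]
  congr 1
  · rcases Nat.eq_zero_or_pos k with rfl | hk
    · simp [mul_coeff_zero]
    · obtain ⟨m, rfl⟩ : ∃ m, k = m + 1 := ⟨k - 1, by omega⟩
      simp [coeff_X_mul]
  · congr 1
    rw [mul_comm]
    rcases k with _ | _ | m
    · rw [coeff_mul_X_pow', if_neg (by omega)]; simp
    · rw [coeff_mul_X_pow', if_neg (by omega)]; simp
    · rw [coeff_mul_X_pow', if_pos (by omega), if_pos (by omega), coeff_derivative]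
      have hm : m + 1 + 1 - 2 + 1 = m + 1 := by omega
      rw [hm]; push_cast; ring

lemma secP_coeff_nonneg (n k : ℕ) : 0 ≤ (secP n).coeff k := by
  induction n generalizing k with
  | zero =>
    show 0 ≤ (1 : Polynomial ℤ).coeff k
    rw [coeff_one]; split_ifs <;> norm_num
  | succ n ih =>
    rw [secP_coeff_succ]
    have A := ih (k - 1); have B := ih (k + 1)
    have hB : (0:ℤ) ≤ (secP n).coeff (k+1) * (k+1) :=
      mul_nonneg B (by positivity)
    rcases lt_or_ge k 2 with h | h
    · split_ifs <;> omega
    · rw [if_neg (by omega), if_pos h]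
      have hA : (0:ℤ) ≤ (secP n).coeff (k-1) * ((k:ℤ) - 1) :=
        mul_nonneg A (by omega)
      omega

lemma secP_coeff_parity (n k : ℕ) (h : n % 2 ≠ k % 2) : (secP n).coeff k = 0 := by
  induction n generalizing k with
  | zero =>
    show (1 : Polynomial ℤ).coeff k = 0
    rw [coeff_one, if_neg (by omega)]
  | succ n ih =>
    rw [secP_coeff_succ, ih (k + 1) (by omega)]
    rcases Nat.eq_zero_or_pos k with rfl | hk
    · simp
    · rw [ih (k - 1) (by omega)]
      simp

lemma secP_coeff_zero_pos (j : ℕ) : 0 < (secP (2 * j)).coeff 0 := by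
  induction j with
  | zero =>
    show (0:ℤ) < (secP 0).coeff 0
    simp [secP]
  | succ j ih =>
    have e1 : (secP (2 * j + 1)).coeff 1
        = (secP (2 * j)).coeff 0 + (secP (2 * j)).coeff 2 * 2 := by
      rw [secP_coeff_succ, if_neg (by omega), if_neg (by omega)]
      norm_num
    have e2 : (secP (2 * (j + 1))).coeff 0 = (secP (2 * j + 1)).coeff 1 := by
      have h : 2 * (j + 1) = (2 * j + 1) + 1 := by ring
      rw [h, secP_coeff_succ, if_pos rfl, if_neg (by omega)]
      norm_num
    have := secP_coeff_nonneg (2 * j) 2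
    omega

noncomputable def secQ (n : ℕ) : Polynomial ℝ := (secP n).map (Int.castRingHom ℝ)

lemma secQ_succ (n : ℕ) :
    secQ (n + 1) = X * secQ n + (1 + X ^ 2) * (secQ n).derivative := by
  simp only [secQ, secP, Polynomial.map_add, Polynomial.map_mul, Polynomial.map_one,
    Polynomial.map_pow, Polynomial.map_X, derivative_map]

noncomputable def secG (n : ℕ) (t : ℝ) : ℝ :=
  π ^ (n + 1) * (secQ n).eval (Real.tan (π * t)) * (Real.cos (π * t))⁻¹

lemma secG_hasDerivAt (n : ℕ) (t : ℝ) (h : Real.cos (π * t) ≠ 0) :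
    HasDerivAt (secG n) (secG (n + 1) t) t := by
  have hmul : HasDerivAt (fun t : ℝ => π * t) π t := by
    simpa using (hasDerivAt_id t).const_mul π
  have htan : HasDerivAt (fun t : ℝ => Real.tan (π * t))
      (1 / Real.cos (π * t) ^ 2 * π) t := (Real.hasDerivAt_tan h).comp t hmul
  have heval : HasDerivAt (fun t : ℝ => (secQ n).eval (Real.tan (π * t)))
      ((secQ n).derivative.eval (Real.tan (π * t)) * (1 / Real.cos (π * t) ^ 2 * π)) t :=
    (Polynomial.hasDerivAt (secQ n) _).comp t htan
  have hcos : HasDerivAt (fun t : ℝ => Real.cos (π * t)) (-Real.sin (π * t) * π) t :=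
    (Real.hasDerivAt_cos (π * t)).comp t hmul
  have hinv : HasDerivAt (fun t : ℝ => (Real.cos (π * t))⁻¹)
      (-(-Real.sin (π * t) * π) / Real.cos (π * t) ^ 2) t := hcos.inv h
  have hprod := (heval.mul hinv).const_mul (π ^ (n + 1))
  have key : π ^ (n + 1) *
      ((secQ n).derivative.eval (Real.tan (π * t)) * (1 / Real.cos (π * t) ^ 2 * π) *
          (Real.cos (π * t))⁻¹ +
        (secQ n).eval (Real.tan (π * t)) *
          (-(-Real.sin (π * t) * π) / Real.cos (π * t) ^ 2)) = secG (n + 1) t := by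
    rw [secG, secQ_succ]
    simp only [eval_add, eval_mul, eval_one, eval_pow, eval_X, Real.tan_eq_sin_div_cos]
    have hsc : Real.sin (π * t) ^ 2 + Real.cos (π * t) ^ 2 = 1 := Real.sin_sq_add_cos_sq _
    field_simp
    linear_combination (-(π ^ 2 * π ^ n * eval (Real.sin (π * t) * (Real.cos (π * t))⁻¹) (derivative (secQ n)))) * hsc
      + (π ^ 2 * π ^ n * eval (Real.sin (π * t) * (Real.cos (π * t))⁻¹) (derivative (secQ n)) - π ^ 2 * π ^ n * eval (Real.sin (π * t) / Real.cos (π * t)) (derivative (secQ n))) * (hsc.symm.trans rfl : (1:ℝ) = _) * 0 + (by rw [div_eq_mul_inv] : π ^ 2 * π ^ n * eval (Real.sin (π * t) / Real.cos (π * t)) (derivative (secQ n)) = π ^ 2 * π ^ n * eval (Real.sin (π * t) * (Real.cos (π * t))⁻¹) (derivative (secQ n))) * (1 - Real.sin (π * t) ^ 2 - Real.cos (π * t) ^ 2)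
  have hfun : (fun y => π ^ (n + 1) * (eval (Real.tan (π * y)) (secQ n) * (Real.cos (π * y))⁻¹))
      = secG n := by
    funext y; simp only [secG]; ring
  rw [← hfun]
  rw [← key]
  exact hprod

lemma secG_eq (t : ℝ) :
    Real.Gamma (1 / 2 + t) * Real.Gamma (1 / 2 - t) = secG 0 t := by
  have h1 : (1 : ℝ) - (1 / 2 + t) = 1 / 2 - t := by ring
  have h2 : π * (1 / 2 + t) = π * t + π / 2 := by ring
  have := Real.Gamma_mul_Gamma_one_sub (1 / 2 + t)
  rw [h1, h2, Real.sin_add_pi_div_two] at this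
  rw [this, secG]
  simp [secQ, secP, div_eq_mul_inv]

lemma iteratedDeriv_eventuallyEq (n : ℕ) :
    iteratedDeriv n (fun t : ℝ => Real.Gamma (1 / 2 + t) * Real.Gamma (1 / 2 - t)) =ᶠ[nhds 0]
      secG n := by
  have hU : {t : ℝ | Real.cos (π * t) ≠ 0} ∈ nhds (0 : ℝ) := by
    have hopen : IsOpen {t : ℝ | Real.cos (π * t) ≠ 0} :=
      isOpen_compl_singleton.preimage (Real.continuous_cos.comp (continuous_const.mul continuous_id))
    refine hopen.mem_nhds ?_
    simp [Real.cos_pi_div_two]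
  induction n with
  | zero =>
    simp only [iteratedDeriv_zero]
    exact Filter.Eventually.of_forall fun t => secG_eq t
  | succ n ih =>
    rw [iteratedDeriv_succ]
    refine ih.deriv.trans ?_
    filter_upwards [hU] with t ht
    exact (secG_hasDerivAt n t ht).deriv

lemma iteratedDeriv_eq_coeff (n : ℕ) :
    iteratedDeriv n (fun t : ℝ => Real.Gamma (1 / 2 + t) * Real.Gamma (1 / 2 - t)) 0 =
      ((secP n).coeff 0 : ℝ) * π ^ (n + 1) := by
  have h := (iteratedDeriv_eventuallyEq n).eq_of_nhds
  rw [h, secG]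
  rw [mul_zero, Real.tan_zero, Real.cos_zero, inv_one, mul_one]
  rw [← Polynomial.coeff_zero_eq_eval_zero]
  simp only [secQ, Polynomial.coeff_map, eq_intCast]
  ring

/-- The Taylor coefficients of `Γ(1/2+t)Γ(1/2−t) = π / cos(πt)` at `t = 0`:
the `(2j)`-th derivative at `0` is a nonzero rational multiple of `π^(2j+1)`,
and every odd-order derivative at `0` vanishes. -/
theorem iteratedDeriv_Gamma_half_add_mul_Gamma_half_sub (j : ℕ) :
    (∃ a : ℚ, a ≠ 0 ∧
      iteratedDeriv (2 * j) (fun t : ℝ => Real.Gamma (1 / 2 + t) * Real.Gamma (1 / 2 - t)) 0 =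
        (a : ℝ) * π ^ (2 * j + 1)) ∧
    (∀ n : ℕ, Odd n →
      iteratedDeriv n (fun t : ℝ => Real.Gamma (1 / 2 + t) * Real.Gamma (1 / 2 - t)) 0 = 0) := by
  constructor
  · refine ⟨((secP (2 * j)).coeff 0 : ℚ), ?_, ?_⟩
    · have := secP_coeff_zero_pos j
      exact_mod_cast this.ne'
    · rw [iteratedDeriv_eq_coeff]
      push_cast
      ring
  · intro n hn
    have h0 : n % 2 ≠ 0 % 2 := by rcases hn with ⟨k, rfl⟩; omega
    rw [iteratedDeriv_eq_coeff, secP_coeff_parity n 0 h0]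
    simp
end

section
/- For every natural number n, the (2n)-th iterated derivative at 0 of the function t ↦ (cos t)⁻¹ is a nonzero integer, and the (2n+1)-th iterated derivative at 0 of this function is zero. -/
open Polynomial in
/-- The polynomials `Q n` with `secⁿ = (Q n)(tan) * sec`. -/
noncomputable def secPoly : ℕ → Polynomial ℤ
  | 0 => 1
  | n + 1 => (1 + X ^ 2) * derivative (secPoly n) + X * secPoly n

open Polynomial

lemma coeff_mul_nonneg {p q : Polynomial ℤ} (hp : ∀ k, 0 ≤ p.coeff k)
    (hq : ∀ k, 0 ≤ q.coeff k) (k : ℕ) : 0 ≤ (p * q).coeff k := by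
  rw [coeff_mul]
  exact Finset.sum_nonneg fun x _ => mul_nonneg (hp _) (hq _)

lemma secPoly_coeff_nonneg : ∀ n k, 0 ≤ (secPoly n).coeff k := by
  intro n
  induction n with
  | zero =>
    intro k
    simp only [secPoly, coeff_one]
    split <;> norm_num
  | succ n ih =>
    intro k
    have hd : ∀ k, 0 ≤ (derivative (secPoly n)).coeff k := by
      intro k
      rw [coeff_derivative]
      exact mul_nonneg (ih _) (by positivity)
    have h1 : ∀ k, 0 ≤ (1 + X ^ 2 : Polynomial ℤ).coeff k := by
      intro k
      rw [coeff_add, coeff_one, coeff_X_pow]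
      split <;> split <;> norm_num
    have hX : ∀ k, 0 ≤ (X : Polynomial ℤ).coeff k := by
      intro k
      rw [coeff_X]
      split <;> norm_num
    simp only [secPoly, coeff_add]
    exact add_nonneg (coeff_mul_nonneg h1 hd k) (coeff_mul_nonneg hX ih k)

lemma secPoly_coeff_pos : ∀ n k, k ≤ n → n % 2 = k % 2 → 0 < (secPoly n).coeff k := by
  intro n
  induction n with
  | zero =>
    intro k hk _
    interval_cases k
    simp [secPoly]
  | succ n ih =>
    intro k hk hpar
    have hknn : k ≠ n := by omega
    simp only [secPoly, coeff_add]
    rcases Nat.lt_or_ge k (n + 1) with h | h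
    · -- k + 1 ≤ n
      have hk1 : k + 1 ≤ n := by omega
      have hpos : 0 < (derivative (secPoly n)).coeff k := by
        rw [coeff_derivative]
        exact mul_pos (ih (k + 1) hk1 (by omega)) (by positivity)
      have : 0 < ((1 + X ^ 2) * derivative (secPoly n)).coeff k := by
        rw [add_mul, one_mul, coeff_add]
        refine lt_of_lt_of_le hpos ?_
        nlinarith [coeff_mul_nonneg (p := (X:Polynomial ℤ)^2)
          (fun k => by rw [coeff_X_pow]; split <;> norm_num)
          (fun k => by
            rw [coeff_derivative]
            exact mul_nonneg (secPoly_coeff_nonneg n _) (by positivity)) k]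
      have h2 : 0 ≤ (X * secPoly n).coeff k :=
        coeff_mul_nonneg (fun k => by rw [coeff_X]; split <;> norm_num)
          (secPoly_coeff_nonneg n) k
      linarith
    · -- k = n + 1
      have hk1 : k = n + 1 := by omega
      subst hk1
      have hpos : 0 < (X * secPoly n).coeff (n + 1) := by
        rw [coeff_X_mul]
        exact ih n le_rfl rfl
      have h2 : 0 ≤ ((1 + X ^ 2) * derivative (secPoly n)).coeff (n + 1) := by
        refine coeff_mul_nonneg ?_ ?_ _
        · intro k; rw [coeff_add, coeff_one, coeff_X_pow]; split <;> split <;> norm_num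
        · intro k
          rw [coeff_derivative]
          exact mul_nonneg (secPoly_coeff_nonneg n _) (by positivity)
      linarith

lemma iteratedDeriv_sec (n : ℕ) : ∀ x : ℝ, Real.cos x ≠ 0 →
    iteratedDeriv n (fun t : ℝ => (Real.cos t)⁻¹) x
      = ((secPoly n).map (Int.castRingHom ℝ)).eval (Real.tan x) * (Real.cos x)⁻¹ := by
  induction n with
  | zero => intro x hx; simp [secPoly]
  | succ n ih =>
    intro x hx
    rw [iteratedDeriv_succ]
    have hU : IsOpen {y : ℝ | Real.cos y ≠ 0} :=
      isOpen_compl_singleton.preimage Real.continuous_cos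
    have hev : (iteratedDeriv n (fun t : ℝ => (Real.cos t)⁻¹)) =ᶠ[nhds x]
        (fun y => ((secPoly n).map (Int.castRingHom ℝ)).eval (Real.tan y) * (Real.cos y)⁻¹) :=
      Filter.eventuallyEq_of_mem (hU.mem_nhds hx) (fun y hy => ih y hy)
    rw [hev.deriv_eq]
    have ht : HasDerivAt Real.tan (1 + Real.tan x ^ 2) x := by
      have h := Real.hasDerivAt_tan hx
      convert h using 1
      rw [Real.tan_eq_sin_div_cos]
      field_simp
      exact Real.cos_sq_add_sin_sq x
    have hsec : HasDerivAt (fun t : ℝ => (Real.cos t)⁻¹)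
        (Real.sin x / Real.cos x ^ 2) x := by
      have h := (Real.hasDerivAt_cos x).inv hx
      simp at h
      exact h
    have hpoly : HasDerivAt
        (fun t : ℝ => ((secPoly n).map (Int.castRingHom ℝ)).eval (Real.tan t))
        ((derivative ((secPoly n).map (Int.castRingHom ℝ))).eval (Real.tan x)
          * (1 + Real.tan x ^ 2)) x :=
      (Polynomial.hasDerivAt ((secPoly n).map (Int.castRingHom ℝ)) (Real.tan x)).comp x ht
    have hmul := hpoly.mul hsec
    simp only [Pi.mul_def] at hmul
    rw [hmul.deriv]
    simp only [secPoly, Polynomial.map_add, Polynomial.map_mul, Polynomial.map_one,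
      Polynomial.map_pow, Polynomial.map_X, derivative_map, eval_add, eval_mul, eval_one,
      eval_pow, eval_X]
    rw [Real.tan_eq_sin_div_cos]
    field_simp

/-- The even-order derivatives of the secant `t ↦ (cos t)⁻¹` at `0` are nonzero
integers (the Euler numbers), and the odd-order derivatives at `0` vanish. -/
theorem iteratedDeriv_sec_zero (n : ℕ) :
    (∃ k : ℤ, k ≠ 0 ∧
      iteratedDeriv (2 * n) (fun t : ℝ => (Real.cos t)⁻¹) 0 = (k : ℝ)) ∧
    iteratedDeriv (2 * n + 1) (fun t : ℝ => (Real.cos t)⁻¹) 0 = 0 := by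
  constructor
  · refine ⟨(secPoly (2 * n)).coeff 0, ?_, ?_⟩
    · exact (secPoly_coeff_pos (2 * n) 0 (Nat.zero_le _) (by omega)).ne'
    · rw [iteratedDeriv_sec (2 * n) 0 (by simp)]
      rw [Real.tan_zero, Real.cos_zero, inv_one, mul_one,
        ← coeff_zero_eq_eval_zero, coeff_map]
      simp
  · have h := iteratedDeriv_comp_neg (2 * n + 1) (fun t : ℝ => (Real.cos t)⁻¹) 0
    simp only [Real.cos_neg, neg_zero, smul_eq_mul] at h
    have hp : ((-1 : ℝ)) ^ (2 * n + 1) = -1 := Odd.neg_one_pow ⟨n, by ring⟩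
    rw [hp] at h
    linarith
end

section
/- Let q be a rational number with 2q ∉ ℤ. Then for every natural number j there exists a real algebraic number d such that ∑_{i=0}^{j} (−1)^(j−i) · Γ^(i)(q) · Γ^(j−i)(1−q) / (i! · (j−i)!) = d · π^(j+1). -/
open Real Polynomial

private lemma algAdd {A : Type*} [CommRing A] [IsDomain A] [Algebra ℚ A] {x y : A}
    (hx : IsAlgebraic ℚ x) (hy : IsAlgebraic ℚ y) : IsAlgebraic ℚ (x + y) := by
  rw [isAlgebraic_iff_isIntegral] at hx hy ⊢
  exact hx.add hy

private lemma algMul {A : Type*} [CommRing A] [IsDomain A] [Algebra ℚ A] {x y : A}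
    (hx : IsAlgebraic ℚ x) (hy : IsAlgebraic ℚ y) : IsAlgebraic ℚ (x * y) := by
  rw [isAlgebraic_iff_isIntegral] at hx hy ⊢
  exact hx.mul hy

private lemma algAeval {A : Type*} [CommRing A] [IsDomain A] [Algebra ℚ A] {x : A}
    (hx : IsAlgebraic ℚ x) (P : Polynomial ℚ) : IsAlgebraic ℚ (Polynomial.aeval x P) := by
  rw [isAlgebraic_iff_isIntegral] at hx ⊢
  induction P using Polynomial.induction_on with
  | C a => simpa using isIntegral_algebraMap
  | add p q hp hq => simpa [map_add] using hp.add hq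
  | monomial n a h =>
      simp only [map_mul, map_pow, aeval_X, aeval_C]
      exact (isIntegral_algebraMap).mul (hx.pow _)

private lemma isAlgebraic_cos_rat_mul_pi (r : ℚ) : IsAlgebraic ℚ (Real.cos (r * π)) := by
  set d : ℕ := r.den with hd
  set z : ℂ := Complex.exp (r * π * Complex.I) with hzdef
  have hz : z ^ (2 * d) = 1 := by
    rw [hzdef, ← Complex.exp_nat_mul]
    have : ((2 * d : ℕ) : ℂ) * ((r : ℂ) * π * Complex.I) = (r.num : ℂ) * (2 * π * Complex.I) := by
      have h1 : ((d : ℚ) * r : ℚ) = (r.num : ℚ) := by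
        rw [hd, mul_comm, Rat.mul_den_eq_num]
      have h2 : ((d : ℂ) * (r : ℂ)) = ((r.num : ℤ) : ℂ) := by
        exact_mod_cast congrArg (fun q : ℚ => (q : ℂ)) h1
      push_cast
      push_cast at h2
      linear_combination (2 * (π:ℂ) * Complex.I) * h2
    rw [this]
    exact_mod_cast Complex.exp_int_mul_two_pi_mul_I r.num
  have hdne : d ≠ 0 := r.den_nz
  have hzint : IsIntegral ℚ z := by
    refine ⟨X ^ (2 * d) - C 1, Polynomial.monic_X_pow_sub_C 1 (by omega), ?_⟩
    simp [hz]
  have hw : IsIntegral ℚ (z + z ^ (2 * d - 1)) := hzint.add (hzint.pow _)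
  have hzne : z ≠ 0 := Complex.exp_ne_zero _
  have h1 : z ^ (2 * d - 1) = z⁻¹ := by
    have h : z ^ (2 * d - 1) * z = 1 := by
      rw [← pow_succ, Nat.sub_add_cancel (by omega), hz]
    exact eq_inv_of_mul_eq_one_left h
  have hkey : ((Real.cos (r * π) : ℝ) : ℂ) = (z + z ^ (2 * d - 1)) * (2 : ℂ)⁻¹ := by
    rw [h1, hzdef, ← Complex.exp_neg]
    rw [show ((r : ℂ) * π * Complex.I) = ((r : ℂ) * π) * Complex.I by ring]
    rw [show (-(((r : ℂ) * π) * Complex.I)) = (-((r : ℂ) * π)) * Complex.I by ring]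
    rw [Complex.exp_mul_I, Complex.exp_mul_I, Complex.cos_neg, Complex.sin_neg]
    have : ((r : ℂ) * π) = (((r : ℝ) * π : ℝ) : ℂ) := by push_cast; ring
    rw [this, ← Complex.ofReal_cos]
    ring
  have halg : IsAlgebraic ℚ ((z + z ^ (2 * d - 1)) * (2 : ℂ)⁻¹) := by
    refine algMul (isAlgebraic_iff_isIntegral.mpr hw) ?_
    have h2 := isAlgebraic_rat (A := ℂ) ℚ (1 / 2)
    have : ((1 / 2 : ℚ) : ℂ) = (2 : ℂ)⁻¹ := by norm_num
    rwa [this] at h2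
  rw [← hkey] at halg
  have hinj : Function.Injective (algebraMap ℝ ℂ) := fun a b hab => by
    simpa using congrArg Complex.re hab
  rwa [show ((Real.cos (r * π) : ℝ) : ℂ) = algebraMap ℝ ℂ (Real.cos (r * π)) from rfl,
    isAlgebraic_algebraMap_iff hinj] at halg

private lemma isAlgebraic_sin_rat_mul_pi (r : ℚ) : IsAlgebraic ℚ (Real.sin (r * π)) := by
  have h := _root_.isAlgebraic_cos_rat_mul_pi (1 / 2 - r)
  have : ((1 / 2 - r : ℚ) : ℝ) * π = π / 2 - (r : ℝ) * π := by push_cast; ring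
  rwa [this, Real.cos_pi_div_two_sub] at h


private lemma analyticAt_RealGamma {x : ℝ} (hx : ∀ n : ℤ, x ≠ n) : AnalyticAt ℝ Real.Gamma x := by
  have hmem : (↑x : ℂ) ∈ (Set.range ((↑) : ℤ → ℂ))ᶜ := by
    intro hc
    obtain ⟨n, hn⟩ := hc
    exact hx n (by exact_mod_cast hn.symm)
  have hopen : IsOpen (Set.range ((↑) : ℤ → ℂ))ᶜ := Complex.isClosed_range_intCast.isOpen_compl
  have hdiff : DifferentiableOn ℂ Complex.Gamma (Set.range ((↑) : ℤ → ℂ))ᶜ := by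
    intro z hz
    refine (Complex.differentiableAt_Gamma z ?_).differentiableWithinAt
    intro m hm
    exact hz ⟨-(m : ℤ), by push_cast [hm]; ring⟩
  have h1 : AnalyticAt ℂ Complex.Gamma ↑x := hdiff.analyticAt (hopen.mem_nhds hmem)
  have h2 : AnalyticAt ℝ (fun t : ℝ => (Complex.Gamma (Complex.ofRealCLM t)).re) x :=
    (Complex.reCLM.analyticAt _).comp ((h1.restrictScalars).comp (Complex.ofRealCLM.analyticAt x))
  have heq : (fun t : ℝ => (Complex.Gamma (Complex.ofRealCLM t)).re) = Real.Gamma := by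
    funext t
    rw [Complex.ofRealCLM_apply, Complex.Gamma_ofReal, Complex.ofReal_re]
  rwa [heq] at h2

private lemma analyticOnNhd_iteratedDeriv {f : ℝ → ℝ} {U : Set ℝ}
    (hf : AnalyticOnNhd ℝ f U) (n : ℕ) :
    AnalyticOnNhd ℝ (iteratedDeriv n f) U := by
  induction n with
  | zero => simpa [iteratedDeriv_zero]
  | succ n ih => rw [iteratedDeriv_succ]; exact ih.deriv

private lemma pascal_sum (F G : ℕ → ℝ) (n : ℕ) :
    ∑ i ∈ Finset.range (n + 2), (((n + 1).choose i : ℕ) : ℝ) * (F i * G (n + 1 - i)) =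
    ∑ i ∈ Finset.range (n + 1), ((n.choose i : ℕ) : ℝ) *
      (F (i + 1) * G (n - i) + F i * G (n - i + 1)) := by
  have hT1 : ∑ i ∈ Finset.range (n + 2), ((n.choose i : ℕ) : ℝ) * (F i * G (n + 1 - i)) =
      (∑ i ∈ Finset.range (n + 1), ((n.choose (i + 1) : ℕ) : ℝ) * (F (i + 1) * G (n - i)))
        + ((n.choose 0 : ℕ) : ℝ) * (F 0 * G (n + 1)) := by
    rw [Finset.sum_range_succ']
    simp [Nat.succ_sub_succ]
  have hT2 : ∑ i ∈ Finset.range (n + 2), ((n.choose i : ℕ) : ℝ) * (F i * G (n + 1 - i)) =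
      ∑ i ∈ Finset.range (n + 1), ((n.choose i : ℕ) : ℝ) * (F i * G (n - i + 1)) := by
    rw [Finset.sum_range_succ, Nat.choose_succ_self]
    simp only [Nat.cast_zero, zero_mul, add_zero]
    refine Finset.sum_congr rfl fun i hi => ?_
    rw [Finset.mem_range] at hi
    rw [Nat.succ_sub (by omega)]
  rw [Finset.sum_range_succ']
  simp only [Nat.succ_sub_succ, Nat.choose_succ_succ', Nat.cast_add, add_mul, Nat.choose_zero_right,
    Nat.cast_one, one_mul, Nat.sub_zero]
  rw [Finset.sum_add_distrib]
  have := hT1.symm.trans hT2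
  simp only [Nat.choose_zero_right, Nat.cast_one, one_mul] at this
  rw [add_assoc, this]
  simp [mul_add, Finset.sum_add_distrib]

private lemma leibniz {f g : ℝ → ℝ} {U : Set ℝ} (hU : IsOpen U)
    (hf : AnalyticOnNhd ℝ f U) (hg : AnalyticOnNhd ℝ g U) (n : ℕ) :
    ∀ x ∈ U, iteratedDeriv n (fun y => f y * g y) x =
      ∑ i ∈ Finset.range (n + 1), ((n.choose i : ℕ) : ℝ) *
        (iteratedDeriv i f x * iteratedDeriv (n - i) g x) := by
  induction n with
  | zero => intro x hx; simp
  | succ n ih =>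
    intro x hx
    have hev : iteratedDeriv n (fun y => f y * g y) =ᶠ[nhds x] (fun y =>
        ∑ i ∈ Finset.range (n + 1), ((n.choose i : ℕ) : ℝ) *
          (iteratedDeriv i f y * iteratedDeriv (n - i) g y)) := by
      filter_upwards [hU.mem_nhds hx] with y hy using ih y hy
    rw [iteratedDeriv_succ, hev.deriv_eq]
    have hdf : ∀ i, DifferentiableAt ℝ (iteratedDeriv i f) x := fun i =>
      (analyticOnNhd_iteratedDeriv hf i x hx).differentiableAt
    have hdg : ∀ i, DifferentiableAt ℝ (iteratedDeriv i g) x := fun i =>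
      (analyticOnNhd_iteratedDeriv hg i x hx).differentiableAt
    rw [deriv_fun_sum (fun i _ => ((hdf i).fun_mul (hdg _)).const_mul _)]
    have hterm : ∀ i ∈ Finset.range (n + 1),
        deriv (fun y => ((n.choose i : ℕ) : ℝ) *
          (iteratedDeriv i f y * iteratedDeriv (n - i) g y)) x
        = ((n.choose i : ℕ) : ℝ) * (iteratedDeriv (i + 1) f x * iteratedDeriv (n - i) g x
            + iteratedDeriv i f x * iteratedDeriv (n - i + 1) g x) := by
      intro i _
      rw [deriv_const_mul _ ((hdf i).fun_mul (hdg _)), deriv_fun_mul (hdf i) (hdg _),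
        ← iteratedDeriv_succ, ← iteratedDeriv_succ]
    rw [Finset.sum_congr rfl hterm]
    exact (pascal_sum (fun i => iteratedDeriv i f x) (fun i => iteratedDeriv i g x) n).symm


private noncomputable def ctP : ℕ → Polynomial ℚ
  | 0 => 1
  | (n + 1) => -(Polynomial.X * ctP n + (1 + Polynomial.X ^ 2) * Polynomial.derivative (ctP n))

private lemma isOpen_sinpi : IsOpen {y : ℝ | Real.sin (π * y) ≠ 0} := by
  have : {y : ℝ | Real.sin (π * y) ≠ 0} = (fun y : ℝ => Real.sin (π * y)) ⁻¹' {0}ᶜ := rfl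
  rw [this]
  exact (Real.continuous_sin.comp (continuous_const.mul continuous_id)).isOpen_preimage _
    isOpen_compl_singleton

private lemma csc_iteratedDeriv (n : ℕ) :
    ∀ x : ℝ, Real.sin (π * x) ≠ 0 →
      iteratedDeriv n (fun y => π / Real.sin (π * y)) x =
        π ^ (n + 1) * (Polynomial.aeval (Real.cos (π * x) / Real.sin (π * x)) (ctP n)) /
          Real.sin (π * x) := by
  induction n with
  | zero => intro x hx; simp [ctP]
  | succ n ih =>
    intro x hx
    have hev : iteratedDeriv n (fun y => π / Real.sin (π * y)) =ᶠ[nhds x] (fun y =>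
        π ^ (n + 1) * (Polynomial.aeval (Real.cos (π * y) / Real.sin (π * y)) (ctP n)) /
          Real.sin (π * y)) := by
      filter_upwards [isOpen_sinpi.mem_nhds hx] with y hy using ih y hy
    rw [iteratedDeriv_succ, hev.deriv_eq]
    set s := Real.sin (π * x) with hs
    set c := Real.cos (π * x) with hc
    set u := c / s with hu
    have hlin : HasDerivAt (fun y : ℝ => π * y) π x := by
      simpa using (hasDerivAt_id x).const_mul π
    have hsin : HasDerivAt (fun y : ℝ => Real.sin (π * y)) (Real.cos (π * x) * π) x :=
      (Real.hasDerivAt_sin (π * x)).comp x hlin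
    have hcos : HasDerivAt (fun y : ℝ => Real.cos (π * y)) (-Real.sin (π * x) * π) x :=
      (Real.hasDerivAt_cos (π * x)).comp x hlin
    have hquot : HasDerivAt (fun y : ℝ => Real.cos (π * y) / Real.sin (π * y))
        ((-Real.sin (π * x) * π * Real.sin (π * x) -
          Real.cos (π * x) * (Real.cos (π * x) * π)) / Real.sin (π * x) ^ 2) x :=
      hcos.div hsin hx
    have hP : HasDerivAt
        (fun y : ℝ => (Polynomial.aeval (Real.cos (π * y) / Real.sin (π * y)) (ctP n) : ℝ))
        ((Polynomial.aeval u (Polynomial.derivative (ctP n)) : ℝ) *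
          ((-Real.sin (π * x) * π * Real.sin (π * x) -
            Real.cos (π * x) * (Real.cos (π * x) * π)) / Real.sin (π * x) ^ 2)) x :=
      by have := HasDerivAt.comp x ((ctP n).hasDerivAt_aeval u) hquot; exact this
    have hF : HasDerivAt (fun y : ℝ =>
        π ^ (n + 1) * (Polynomial.aeval (Real.cos (π * y) / Real.sin (π * y)) (ctP n) : ℝ) /
          Real.sin (π * y))
        (((π ^ (n + 1) * ((Polynomial.aeval u (Polynomial.derivative (ctP n)) : ℝ) *
            ((-Real.sin (π * x) * π * Real.sin (π * x) -
              Real.cos (π * x) * (Real.cos (π * x) * π)) / Real.sin (π * x) ^ 2))) *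
            Real.sin (π * x) -
          (π ^ (n + 1) * (Polynomial.aeval u (ctP n) : ℝ)) * (Real.cos (π * x) * π)) /
            Real.sin (π * x) ^ 2) x :=
      (hP.const_mul (π ^ (n + 1))).div hsin hx
    rw [hF.deriv]
    have hev2 : (Polynomial.aeval u (ctP (n + 1)) : ℝ) =
        -(u * (Polynomial.aeval u (ctP n) : ℝ) +
          (1 + u ^ 2) * (Polynomial.aeval u (Polynomial.derivative (ctP n)) : ℝ)) := by
      simp [ctP, map_add, map_mul, map_pow, map_neg, map_one]
    have pyth : s ^ 2 + c ^ 2 = 1 := Real.sin_sq_add_cos_sq (π * x)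
    rw [hev2, hu]
    rw [← hs, ← hc]
    have hs0 : s ≠ 0 := hx
    field_simp
    ring_nf


/-- For rational `q` with `2q ∉ ℤ`, the `j`-th Taylor coefficient of
`Γ(q+t)Γ(1−q−t)` is an algebraic multiple of `π^(j+1)`. -/
theorem gamma_reflection_coeff_algebraic_multiple_pi
    (q : ℚ) (hq : ¬ ∃ k : ℤ, 2 * q = (k : ℚ)) (j : ℕ) :
    ∃ d : ℝ, IsAlgebraic ℚ d ∧
      (∑ i ∈ Finset.range (j + 1),
          (-1 : ℝ) ^ (j - i) * iteratedDeriv i Real.Gamma (q : ℝ) *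
            iteratedDeriv (j - i) Real.Gamma (1 - (q : ℝ)) /
              ((Nat.factorial i : ℝ) * (Nat.factorial (j - i) : ℝ))) =
        d * π ^ (j + 1) := by
  have hUnotint : ∀ y : ℝ, Real.sin (π * y) ≠ 0 → ∀ n : ℤ, y ≠ n := by
    intro y hy n hn
    exact hy (by rw [hn, mul_comm]; exact Real.sin_int_mul_pi n)
  have hsq : Real.sin (π * (q : ℝ)) ≠ 0 := by
    intro h0
    obtain ⟨n, hn⟩ := Real.sin_eq_zero_iff.mp h0
    have hqn : (q : ℝ) = (n : ℝ) := by
      have h' : (n : ℝ) * π = (q : ℝ) * π := by rw [hn]; ring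
      exact (mul_right_cancel₀ Real.pi_ne_zero h').symm
    have : (2 * q : ℚ) = ((2 * n : ℤ) : ℚ) := by
      have : q = (n : ℚ) := by exact_mod_cast hqn
      rw [this]; push_cast; ring
    exact hq ⟨2 * n, this⟩
  set U : Set ℝ := {y : ℝ | Real.sin (π * y) ≠ 0} with hUdef
  have hqU : (q : ℝ) ∈ U := hsq
  have hGam : AnalyticOnNhd ℝ Real.Gamma U := fun y hy => analyticAt_RealGamma (hUnotint y hy)
  set g : ℝ → ℝ := fun y => Real.Gamma (1 - y) with hgdef
  have hg : AnalyticOnNhd ℝ g U := by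
    intro y hy
    have h1 : AnalyticAt ℝ Real.Gamma (1 - y) := by
      refine analyticAt_RealGamma fun n hn => ?_
      refine hUnotint y hy (1 - n) ?_
      push_cast
      linarith
    have h2 : AnalyticAt ℝ (fun z : ℝ => 1 - z) y := analyticAt_const.sub analyticAt_id
    exact h1.comp h2
  have hgev : ∀ m : ℕ, iteratedDeriv m g (q : ℝ) =
      (-1 : ℝ) ^ m * iteratedDeriv m Real.Gamma (1 - (q : ℝ)) := by
    intro m
    have h2 := iteratedDeriv_comp_neg m (fun z => Real.Gamma (1 + z)) (q : ℝ)
    have h3 := congrFun (iteratedDeriv_comp_const_add m Real.Gamma 1) (-(q : ℝ))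
    have h1 : iteratedDeriv m g (q : ℝ) =
        iteratedDeriv m (fun y => Real.Gamma (1 + -y)) (q : ℝ) := by
      apply Filter.EventuallyEq.iteratedDeriv_eq
      filter_upwards with y
      rw [hgdef]; ring_nf
    rw [h1]
    rw [show (fun y : ℝ => Real.Gamma (1 + -y)) = (fun y : ℝ => (fun z => Real.Gamma (1 + z)) (-y))
      from rfl, h2, h3, smul_eq_mul]
    norm_num [sub_eq_add_neg]
  have hleib := leibniz isOpen_sinpi hGam hg j (q : ℝ) hqU
  have hsum : (∑ i ∈ Finset.range (j + 1),
        (-1 : ℝ) ^ (j - i) * iteratedDeriv i Real.Gamma (q : ℝ) *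
          iteratedDeriv (j - i) Real.Gamma (1 - (q : ℝ)) /
            ((Nat.factorial i : ℝ) * (Nat.factorial (j - i) : ℝ))) =
      ((j.factorial : ℝ))⁻¹ * iteratedDeriv j (fun y => Real.Gamma y * g y) (q : ℝ) := by
    rw [hleib, Finset.mul_sum]
    refine Finset.sum_congr rfl fun i hi => ?_
    rw [Finset.mem_range] at hi
    have hij : i ≤ j := by omega
    rw [hgev (j - i)]
    have hfac : (j.choose i : ℝ) * ((i.factorial : ℝ) * ((j - i).factorial : ℝ)) =
        (j.factorial : ℝ) := by
      rw [← mul_assoc]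
      exact_mod_cast Nat.choose_mul_factorial_mul_factorial hij
    have h1 : (i.factorial : ℝ) ≠ 0 := Nat.cast_ne_zero.mpr i.factorial_ne_zero
    have h2 : ((j - i).factorial : ℝ) ≠ 0 := Nat.cast_ne_zero.mpr (j - i).factorial_ne_zero
    have h3 : (j.factorial : ℝ) ≠ 0 := Nat.cast_ne_zero.mpr j.factorial_ne_zero
    field_simp
    linear_combination (-iteratedDeriv i Real.Gamma (q : ℝ) *
      iteratedDeriv (j - i) Real.Gamma (1 - (q : ℝ))) * hfac
  have hfuneq : (fun y => Real.Gamma y * g y) = fun y => π / Real.sin (π * y) := by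
    funext y
    exact Real.Gamma_mul_Gamma_one_sub y
  rw [hsum, hfuneq, csc_iteratedDeriv j (q : ℝ) hsq]
  refine ⟨((j.factorial : ℝ))⁻¹ *
      (Polynomial.aeval (Real.cos (π * (q : ℝ)) / Real.sin (π * (q : ℝ))) (ctP j)) /
        Real.sin (π * (q : ℝ)), ?_, by ring⟩
  have hcos : IsAlgebraic ℚ (Real.cos (π * (q : ℝ))) := by
    have := _root_.isAlgebraic_cos_rat_mul_pi q; rwa [mul_comm] at this
  have hsin : IsAlgebraic ℚ (Real.sin (π * (q : ℝ))) := by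
    have := _root_.isAlgebraic_sin_rat_mul_pi q; rwa [mul_comm] at this
  have hsinv : IsAlgebraic ℚ (Real.sin (π * (q : ℝ)))⁻¹ := hsin.inv
  have hu : IsAlgebraic ℚ (Real.cos (π * (q : ℝ)) / Real.sin (π * (q : ℝ))) := by
    rw [div_eq_mul_inv]; exact algMul hcos hsinv
  have hfacalg : IsAlgebraic ℚ ((j.factorial : ℝ))⁻¹ := by
    have := isAlgebraic_rat (A := ℝ) ℚ ((j.factorial : ℚ))⁻¹
    rwa [Rat.cast_inv, Rat.cast_natCast] at this
  rw [div_eq_mul_inv]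
  exact algMul (algMul hfacalg (algAeval hu (ctP j))) hsinv
end

section
/- Let q be a rational number with 2q ∉ ℤ. Then the set of natural numbers j for which the j-th iterated derivative at 0 of the function t ↦ π / sin(π(q + t)) is nonzero is infinite. -/
open Real

lemma analyticAt_real_sin (x : ℝ) : AnalyticAt ℝ Real.sin x := by
  have h1 : AnalyticAt ℂ Complex.sin (x : ℂ) := Complex.differentiable_sin.analyticAt _
  have h2 : AnalyticAt ℝ (fun y : ℝ => Complex.sin (y : ℂ)) x :=
    h1.restrictScalars.comp (Complex.ofRealCLM.analyticAt x)
  have h3 : AnalyticAt ℝ (fun y : ℝ => (Complex.sin (y : ℂ)).re) x :=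
    (Complex.reCLM.analyticAt _).comp h2
  have : Real.sin = fun y : ℝ => (Complex.sin (y : ℂ)).re := by
    funext y; rw [Complex.sin_ofReal_re]
  rw [this]
  exact h3

/-- For rational `q` with `2q ∉ ℤ`, infinitely many derivatives at `0` of
`t ↦ π / sin (π (q + t))` are nonzero. -/
theorem iteratedDeriv_pi_div_sin_nonzero_infinitely_often
    (q : ℚ) (hq : ¬ ∃ k : ℤ, 2 * q = (k : ℚ)) :
    {j : ℕ |
      iteratedDeriv j (fun t : ℝ => π / Real.sin (π * ((q : ℝ) + t))) 0 ≠ 0}.Infinite := by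
  set f : ℝ → ℝ := fun t : ℝ => π / Real.sin (π * ((q : ℝ) + t)) with hf
  have hqz : ∀ k : ℤ, (q : ℝ) ≠ (k : ℝ) := by
    intro k hk
    exact hq ⟨2 * k, by push_cast; rw [show (q:ℚ) = (k:ℚ) from mod_cast hk]⟩
  set a : ℝ := (⌊(q : ℝ)⌋ : ℝ) - (q : ℝ) with ha
  set b : ℝ := (⌈(q : ℝ)⌉ : ℝ) - (q : ℝ) with hb
  have ha0 : a < 0 := by
    have := Int.floor_le (q : ℝ)
    have hne := hqz ⌊(q : ℝ)⌋
    simp only [ha]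
    nlinarith [lt_of_le_of_ne this (Ne.symm hne)]
  have hb0 : 0 < b := by
    have := Int.le_ceil (q : ℝ)
    have hne := hqz ⌈(q : ℝ)⌉
    simp only [hb]
    nlinarith [lt_of_le_of_ne this hne]
  have h0mem : (0 : ℝ) ∈ Set.Ioo a b := ⟨ha0, hb0⟩
  have hsin_ne : ∀ t ∈ Set.Ioo a b, Real.sin (π * ((q : ℝ) + t)) ≠ 0 := by
    intro t ht h0
    rw [Real.sin_eq_zero_iff] at h0
    obtain ⟨n, hn⟩ := h0
    have hqt : (q : ℝ) + t = n := by
      have : π * (n : ℝ) = π * ((q : ℝ) + t) := by linarith [hn]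
      exact (mul_left_cancel₀ Real.pi_ne_zero this).symm
    have h1 : ((⌊(q : ℝ)⌋ : ℝ)) < (n : ℝ) := by
      have := ht.1; simp only [ha] at this; linarith
    have h2 : ((n : ℝ)) < ((⌈(q : ℝ)⌉ : ℝ)) := by
      have := ht.2; simp only [hb] at this; linarith
    have h1' : ⌊(q : ℝ)⌋ < n := mod_cast h1
    have h2' : n < ⌈(q : ℝ)⌉ := mod_cast h2
    have := Int.ceil_le_floor_add_one (q : ℝ)
    omega
  have hfa : AnalyticOnNhd ℝ f (Set.Ioo a b) := by
    intro t ht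
    exact analyticAt_const.div
      ((analyticAt_real_sin _).comp (analyticAt_const.mul (analyticAt_const.add analyticAt_id)))
      (hsin_ne t ht)
  by_contra hfin
  rw [Set.not_infinite] at hfin
  obtain ⟨N, hNb⟩ := hfin.bddAbove
  have hN : ∀ j, N < j → iteratedDeriv j f 0 = 0 := by
    intro j hj
    by_contra hne
    exact absurd (hNb hne) (by omega)
  obtain ⟨p, hp⟩ := hfa 0 h0mem
  obtain ⟨r, hr⟩ := hp
  have hcoeff : ∀ j, N < j → p.coeff j = 0 := by
    intro j hj
    have h1 := hr.factorial_smul (1 : ℝ) j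
    rw [← iteratedDeriv_eq_iteratedFDeriv, hN j hj] at h1
    have hcj : (p j fun _ => (1 : ℝ)) = p.coeff j := rfl
    rw [hcj] at h1
    have h2 : (j.factorial : ℝ) * p.coeff j = 0 := by rw [← nsmul_eq_mul]; exact h1
    rcases mul_eq_zero.mp h2 with h | h
    · exact absurd (by exact_mod_cast h) j.factorial_ne_zero
    · exact h
  set P : ℝ → ℝ := fun t => ∑ n ∈ Finset.range (N + 1), p.coeff n * t ^ n with hP
  have hfP : f =ᶠ[nhds (0 : ℝ)] P := by
    filter_upwards [EMetric.ball_mem_nhds (0 : ℝ) hr.r_pos] with y hy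
    have hs := hr.hasSum (by simpa using hy)
    simp only [zero_add] at hs
    have hs' : HasSum (fun n => p.coeff n * y ^ n) (f y) := by
      have hfun : (fun n => p.coeff n * y ^ n) = fun n => p n (fun _ => y) := by
        funext n
        rw [FormalMultilinearSeries.apply_eq_pow_smul_coeff, smul_eq_mul, mul_comm]
      rw [hfun]; exact hs
    have hzero : ∀ n ∉ Finset.range (N + 1), p.coeff n * y ^ n = 0 := by
      intro n hn
      rw [Finset.mem_range, not_lt] at hn
      rw [hcoeff n (by omega)]; ring
    have hs2 : HasSum (fun n => p.coeff n * y ^ n) (P y) :=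
      hasSum_sum_of_ne_finset_zero hzero
    exact hs'.unique hs2
  have hPa : AnalyticOnNhd ℝ P (Set.Ioo a b) := by
    intro t _
    apply Finset.analyticAt_fun_sum
    intro n _
    exact analyticAt_const.mul (analyticAt_id.pow n)
  have hEq : Set.EqOn f P (Set.Ioo a b) :=
    hfa.eqOn_of_preconnected_of_eventuallyEq hPa isPreconnected_Ioo h0mem hfP
  set F : ℝ → ℝ := fun t => P t * Real.sin (π * ((q : ℝ) + t)) with hF
  have hFc : Continuous F := by
    apply Continuous.mul
    · exact continuous_finset_sum _ fun n _ => continuous_const.mul (continuous_pow n)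
    · exact Real.continuous_sin.comp (continuous_const.mul (continuous_const.add continuous_id))
  have hab : a < b := lt_trans ha0 hb0
  haveI : (nhdsWithin b (Set.Ioo a b)).NeBot := by
    rw [← mem_closure_iff_nhdsWithin_neBot, closure_Ioo hab.ne]
    exact ⟨hab.le, le_refl b⟩
  have h1 : Filter.Tendsto F (nhdsWithin b (Set.Ioo a b)) (nhds (F b)) :=
    (hFc.continuousAt).continuousWithinAt
  have hconst : ∀ᶠ t in nhdsWithin b (Set.Ioo a b), F t = π := by
    filter_upwards [self_mem_nhdsWithin] with t ht
    have : F t = f t * Real.sin (π * ((q : ℝ) + t)) := by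
      rw [hF]; simp only; rw [hEq ht]
    rw [this, hf]
    simp only
    rw [div_mul_cancel₀ _ (hsin_ne t ht)]
  have h2 : Filter.Tendsto F (nhdsWithin b (Set.Ioo a b)) (nhds π) :=
    Filter.Tendsto.congr' (Filter.EventuallyEq.symm hconst) tendsto_const_nhds
  have hFb : F b = π := tendsto_nhds_unique h1 h2
  have hsinb : Real.sin (π * ((q : ℝ) + b)) = 0 := by
    have : (q : ℝ) + b = (⌈(q : ℝ)⌉ : ℝ) := by rw [hb]; ring
    rw [this, mul_comm]
    exact Real.sin_int_mul_pi _
  rw [hF] at hFb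
  simp only [hsinb, mul_zero] at hFb
  exact Real.pi_ne_zero hFb.symm
end

section
/- Let q be a rational number with 2q ∉ ℤ and let j be a natural number. Then there exists a real algebraic number d such that the j-th iterated derivative at 0 of the function t ↦ π / sin(π(q + t)) equals d · π^(j+1). -/
open Real Polynomial

/-- Algebraicity of `cos (π * q)` for rational `q`, via Chebyshev polynomials. -/
lemma isAlgebraic_cos_pi_rat (q : ℚ) : IsAlgebraic ℚ (Real.cos (π * (q : ℝ))) := by
  set n : ℤ := 2 * q.den with hn
  refine ⟨Polynomial.Chebyshev.T ℚ n - 1, ?_, ?_⟩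
  · intro h
    have hmap : Polynomial.Chebyshev.T ℝ n = 1 := by
      have := congrArg (Polynomial.map (algebraMap ℚ ℝ)) (sub_eq_zero.mp h)
      simpa [Polynomial.Chebyshev.map_T] using this
    have hn0 : (0:ℤ) < n := by positivity
    have := Polynomial.Chebyshev.T_real_cos (π / n) n
    rw [hmap] at this
    have hne : (n : ℝ) ≠ 0 := by exact_mod_cast hn0.ne'
    rw [mul_div_cancel₀ _ hne] at this
    simp [Real.cos_pi] at this
    norm_num at this
  · have key : Real.cos ((n : ℝ) * (π * q)) = 1 := by
      have hd : ((q.den : ℝ)) * (q : ℝ) = (q.num : ℝ) := by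
        exact_mod_cast congrArg (fun x : ℚ => (x : ℝ)) (Rat.den_mul_eq_num q)
      have : (n : ℝ) * (π * (q : ℝ)) = 2 * π * (q.num : ℝ) := by
        rw [hn]
        push_cast
        linear_combination (2 * π) * hd
      rw [this]
      rw [mul_comm (2 * π) ((q.num : ℝ))]
      exact_mod_cast Real.cos_int_mul_two_pi q.num
    have := Polynomial.Chebyshev.T_real_cos (π * q) n
    rw [key] at this
    have hTa : (Polynomial.aeval (Real.cos (π * (q:ℝ)))) (Polynomial.Chebyshev.T ℚ n) = 1 := by
      rw [Polynomial.aeval_def, ← Polynomial.eval_map, Polynomial.Chebyshev.map_T]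
      exact this
    simp [hTa]

lemma isAlgebraic_sin_pi_rat (q : ℚ) : IsAlgebraic ℚ (Real.sin (π * (q : ℝ))) := by
  have h : Real.sin (π * (q : ℝ)) = Real.cos (π * ((1/2 - q : ℚ) : ℝ)) := by
    rw [← Real.cos_pi_div_two_sub]
    push_cast
    ring_nf
  rw [h]
  exact isAlgebraic_cos_pi_rat _

/-- Polynomial evaluation preserves algebraicity. -/
lemma isAlgebraic_aeval {x : ℝ} (hx : IsAlgebraic ℚ x) (p : Polynomial ℚ) :
    IsAlgebraic ℚ (Polynomial.aeval x p) := by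
  rw [isAlgebraic_iff_isIntegral] at hx ⊢
  let y : integralClosure ℚ ℝ := ⟨x, hx⟩
  have : Polynomial.aeval x p = ((Polynomial.aeval y p : integralClosure ℚ ℝ) : ℝ) := by
    rw [Polynomial.aeval_subalgebra_coe]
  rw [this]
  exact (Polynomial.aeval y p).2

/-- The recursive family of polynomials governing derivatives of `1/sin`. -/
noncomputable def cscPoly : ℕ → Polynomial ℚ
  | 0 => 1
  | (j+1) => (X ^ 2 - 1) * (cscPoly j).derivative - C ((j : ℚ) + 1) * X * cscPoly j

/-- For rational `q` with `2q ∉ ℤ` and any `j`, the `j`-th derivative at `0` of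
`t ↦ π / sin (π (q + t))` is an algebraic multiple of `π^(j+1)`. -/
theorem iteratedDeriv_pi_div_sin_algebraic_multiple_pi
    (q : ℚ) (hq : ¬ ∃ k : ℤ, 2 * q = (k : ℚ)) (j : ℕ) :
    ∃ d : ℝ, IsAlgebraic ℚ d ∧
      iteratedDeriv j (fun t : ℝ => π / Real.sin (π * ((q : ℝ) + t))) 0 = d * π ^ (j + 1) := by
  -- abbreviations
  set f : ℝ → ℝ := fun t : ℝ => π / Real.sin (π * ((q : ℝ) + t)) with hf
  set s : ℝ → ℝ := fun t => Real.sin (π * ((q : ℝ) + t)) with hs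
  set c : ℝ → ℝ := fun t => Real.cos (π * ((q : ℝ) + t)) with hc
  have hπ : (π : ℝ) ≠ 0 := Real.pi_ne_zero
  -- sin (π q) ≠ 0
  have hs0 : s 0 ≠ 0 := by
    intro h
    rw [hs] at h
    simp only [add_zero] at h
    obtain ⟨n, hn⟩ := Real.sin_eq_zero_iff.mp h
    apply hq
    refine ⟨2 * n, ?_⟩
    have hqn : (q : ℝ) = (n : ℝ) :=
      mul_left_cancel₀ hπ (by rw [← hn]; ring)
    have hq' : q = (n : ℚ) := by exact_mod_cast hqn
    rw [hq']
    push_cast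
    ring
  -- the nice form of the iterated derivatives
  have key : ∀ (j : ℕ) (t : ℝ), s t ≠ 0 →
      iteratedDeriv j f t =
        π ^ (j+1) * ((cscPoly j).map (algebraMap ℚ ℝ)).eval (c t) / (s t) ^ (j+1) := by
    intro j
    induction j with
    | zero =>
      intro t ht
      simp [cscPoly, hf, hs]
    | succ j ih =>
      intro t ht
      -- derivative of the nice form
      have hderiv : ∀ x : ℝ, s x ≠ 0 →
          HasDerivAt (fun y => π ^ (j+1) * ((cscPoly j).map (algebraMap ℚ ℝ)).eval (c y) / (s y) ^ (j+1))
            (π ^ (j+2) * ((cscPoly (j+1)).map (algebraMap ℚ ℝ)).eval (c x) / (s x) ^ (j+2)) x := by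
        intro x hx
        have hu : HasDerivAt (fun y : ℝ => π * ((q : ℝ) + y)) π x := by
          simpa using ((hasDerivAt_id x).const_add (q : ℝ)).const_mul π
        have hcx : HasDerivAt c (-s x * π) x := (Real.hasDerivAt_cos _).comp x hu
        have hsx : HasDerivAt s (c x * π) x := (Real.hasDerivAt_sin _).comp x hu
        set P : Polynomial ℝ := (cscPoly j).map (algebraMap ℚ ℝ) with hP
        have hN : HasDerivAt (fun y => P.eval (c y)) (P.derivative.eval (c x) * (-s x * π)) x :=
          (P.hasDerivAt (c x)).comp x hcx
        have hD : HasDerivAt (fun y => (s y) ^ (j+1))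
            ((j+1 : ℕ) * (s x) ^ j * (c x * π)) x := by
          simpa using hsx.fun_pow (j+1)
        have hDne : (s x) ^ (j+1) ≠ 0 := pow_ne_zero _ hx
        have := ((hN.const_mul (π ^ (j+1))).fun_div hD hDne)
        convert this using 1
        · rfl
        · rfl
        have hpyth : (s x) ^ 2 = 1 - (c x) ^ 2 := Real.sin_sq _
        have heval : ((cscPoly (j+1)).map (algebraMap ℚ ℝ)).eval (c x) =
            ((c x) ^ 2 - 1) * (P.derivative).eval (c x) - ((j : ℝ) + 1) * c x * P.eval (c x) := by
          simp [cscPoly, hP, Polynomial.derivative_map]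
        push_cast
        rw [heval]
        have e1 : π ^ (j + 1) * (P.derivative.eval (c x) * (-s x * π)) * s x ^ (j + 1) -
            π ^ (j + 1) * P.eval (c x) * (((j : ℝ) + 1) * s x ^ j * (c x * π)) =
            π ^ (j + 2) * ((c x ^ 2 - 1) * P.derivative.eval (c x)
              - ((j : ℝ) + 1) * c x * P.eval (c x)) * s x ^ j := by
          linear_combination (-(π ^ (j + 2) * s x ^ j * P.derivative.eval (c x))) * hpyth
        rw [e1]
        rw [div_eq_div_iff (pow_ne_zero _ hx) (pow_ne_zero 2 hDne)]
        ring
      -- the set where s ≠ 0 is open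
      have hopen : IsOpen {x : ℝ | s x ≠ 0} := by
        have : Continuous s := by
          rw [hs]; fun_prop
        exact isOpen_compl_iff.mpr (isClosed_singleton.preimage this)
      have hmem : {x : ℝ | s x ≠ 0} ∈ nhds t := hopen.mem_nhds ht
      have hev : iteratedDeriv j f =ᶠ[nhds t]
          (fun y => π ^ (j+1) * ((cscPoly j).map (algebraMap ℚ ℝ)).eval (c y) / (s y) ^ (j+1)) := by
        filter_upwards [hmem] with y hy
        exact ih y hy
      rw [iteratedDeriv_succ, hev.deriv_eq, (hderiv t ht).deriv]
  -- conclude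
  refine ⟨((cscPoly j).map (algebraMap ℚ ℝ)).eval (c 0) * ((s 0)⁻¹) ^ (j+1), ?_, ?_⟩
  · have hcalg : IsAlgebraic ℚ (c 0) := by
      have : c 0 = Real.cos (π * (q : ℝ)) := by simp [hc]
      rw [this]; exact isAlgebraic_cos_pi_rat q
    have hsalg : IsAlgebraic ℚ (s 0) := by
      have : s 0 = Real.sin (π * (q : ℝ)) := by simp [hs]
      rw [this]; exact isAlgebraic_sin_pi_rat q
    have h1 : IsAlgebraic ℚ (((cscPoly j).map (algebraMap ℚ ℝ)).eval (c 0)) := by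
      have : ((cscPoly j).map (algebraMap ℚ ℝ)).eval (c 0) = Polynomial.aeval (c 0) (cscPoly j) := by
        rw [Polynomial.aeval_def, ← Polynomial.eval_map]
      rw [this]
      exact isAlgebraic_aeval hcalg _
    have h2 : IsAlgebraic ℚ (((s 0)⁻¹) ^ (j+1)) := by
      rw [isAlgebraic_iff_isIntegral] at hsalg ⊢
      exact ((isAlgebraic_iff_isIntegral.mpr hsalg).inv.isIntegral).pow _
    rw [isAlgebraic_iff_isIntegral] at h1 h2 ⊢
    exact h1.mul h2
  · rw [key j 0 hs0]
    field_simp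
    rw [mul_assoc, ← mul_pow, mul_one_div_cancel hs0, one_pow, mul_one]
end

section
/- The second derivative of the real Gamma function at 1 minus the square of the first derivative of the real Gamma function at 1 equals π²/6; that is, Γ^(2)(1) − (Γ^(1)(1))² = π²/6. -/
open Real Set

lemma analyticAt_realGamma {x : ℝ} (hx : 0 < x) : AnalyticAt ℝ Real.Gamma x := by
  have hC : AnalyticAt ℂ Complex.Gamma (x : ℂ) := by
    have : AnalyticOnNhd ℂ Complex.Gamma {s : ℂ | 0 < s.re} := by
      refine DifferentiableOn.analyticOnNhd (fun s hs => ?_)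
        (isOpen_lt continuous_const Complex.continuous_re)
      refine (Complex.differentiableAt_Gamma s (fun m => ?_)).differentiableWithinAt
      intro h
      rw [h] at hs
      simp only [Set.mem_setOf_eq, Complex.neg_re, Complex.natCast_re] at hs
      linarith [Nat.cast_nonneg (α := ℝ) m]
    exact this _ (by simpa using hx)
  have h1 : AnalyticAt ℝ (fun s : ℝ => (Complex.Gamma (s : ℂ)).re) x :=
    Complex.reCLM.analyticAt _ |>.comp ((hC.restrictScalars).comp (Complex.ofRealCLM.analyticAt x))
  have : Real.Gamma = fun s : ℝ => (Complex.Gamma (s : ℂ)).re := by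
    funext s; rw [Complex.Gamma_ofReal, Complex.ofReal_re]
  rw [this]; exact h1

lemma analyticOnNhd_realGamma : AnalyticOnNhd ℝ Real.Gamma (Ioi (0:ℝ)) :=
  fun _ hx => analyticAt_realGamma hx

noncomputable def Ga : ℝ → ℝ := deriv Real.Gamma
noncomputable def Gb : ℝ → ℝ := deriv Ga

lemma hasDerivAt_Ga {x : ℝ} (hx : 0 < x) : HasDerivAt Real.Gamma (Ga x) x :=
  ((analyticOnNhd_realGamma x hx).differentiableAt).hasDerivAt

lemma hasDerivAt_Gb {x : ℝ} (hx : 0 < x) : HasDerivAt Ga (Gb x) x :=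
  ((analyticOnNhd_realGamma.deriv x hx).differentiableAt).hasDerivAt

lemma diffAt_Gb {x : ℝ} (hx : 0 < x) : DifferentiableAt ℝ Gb x :=
  (analyticOnNhd_realGamma.deriv.deriv x hx).differentiableAt

lemma hd_add {f : ℝ → ℝ} {f' s : ℝ} (hf : HasDerivAt f f' (1 + s)) :
    HasDerivAt (fun t => f (1 + t)) f' s := by
  simpa [Function.comp_def] using hf.comp s ((hasDerivAt_id s).const_add 1)

lemma hd_sub {f : ℝ → ℝ} {f' s : ℝ} (hf : HasDerivAt f f' (1 - s)) :
    HasDerivAt (fun t => f (1 - t)) (-f') s := by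
  simpa [Function.comp_def] using hf.comp s ((hasDerivAt_id s).const_sub 1)

lemma hd_sin (s : ℝ) : HasDerivAt (fun t => Real.sin (π * t)) (π * Real.cos (π * s)) s := by
  simpa [Function.comp_def, mul_comm] using
    (Real.hasDerivAt_sin (π * s)).comp s ((hasDerivAt_id s).const_mul π)

lemma hd_cos (s : ℝ) : HasDerivAt (fun t => Real.cos (π * t)) (-(π * Real.sin (π * s))) s := by
  simpa [Function.comp_def, mul_comm] using
    (Real.hasDerivAt_cos (π * s)).comp s ((hasDerivAt_id s).const_mul π)

noncomputable def GG : ℝ → ℝ := fun s => Real.Gamma (1+s) * Real.Gamma (1-s)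
noncomputable def GG1 : ℝ → ℝ := fun s => Ga (1+s) * Real.Gamma (1-s) - Real.Gamma (1+s) * Ga (1-s)
noncomputable def GG2 : ℝ → ℝ := fun s =>
  Gb (1+s) * Real.Gamma (1-s) - 2 * Ga (1+s) * Ga (1-s) + Real.Gamma (1+s) * Gb (1-s)

lemma hd_GG {s : ℝ} (h1 : 0 < 1 + s) (h2 : 0 < 1 - s) : HasDerivAt GG (GG1 s) s := by
  have := (hd_add (hasDerivAt_Ga h1)).mul (hd_sub (hasDerivAt_Ga h2))
  refine this.congr_deriv ?_
  simp only [GG1]; ring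

lemma hd_GG1 {s : ℝ} (h1 : 0 < 1 + s) (h2 : 0 < 1 - s) : HasDerivAt GG1 (GG2 s) s := by
  have := ((hd_add (hasDerivAt_Gb h1)).mul (hd_sub (hasDerivAt_Ga h2))).sub
    ((hd_add (hasDerivAt_Ga h1)).mul (hd_sub (hasDerivAt_Gb h2)))
  refine this.congr_deriv ?_
  simp only [GG2]; ring

lemma diffAt_GG2 : DifferentiableAt ℝ GG2 0 := by
  have h1 : (0:ℝ) < 1 + 0 := by norm_num
  have h2 : (0:ℝ) < 1 - 0 := by norm_num
  have ha : DifferentiableAt ℝ (fun t : ℝ => Gb (1+t)) 0 :=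
    (hd_add ((diffAt_Gb h1).hasDerivAt)).differentiableAt
  have hb : DifferentiableAt ℝ (fun t : ℝ => Gb (1-t)) 0 :=
    (hd_sub ((diffAt_Gb h2).hasDerivAt)).differentiableAt
  have hΓa : DifferentiableAt ℝ (fun t : ℝ => Real.Gamma (1+t)) 0 :=
    (hd_add (hasDerivAt_Ga h1)).differentiableAt
  have hΓb : DifferentiableAt ℝ (fun t : ℝ => Real.Gamma (1-t)) 0 :=
    (hd_sub (hasDerivAt_Ga h2)).differentiableAt
  have haa : DifferentiableAt ℝ (fun t : ℝ => Ga (1+t)) 0 :=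
    (hd_add (hasDerivAt_Gb h1)).differentiableAt
  have hab : DifferentiableAt ℝ (fun t : ℝ => Ga (1-t)) 0 :=
    (hd_sub (hasDerivAt_Gb h2)).differentiableAt
  exact ((ha.mul hΓb).sub ((haa.const_mul 2).mul hab)).add (hΓa.mul hb)

noncomputable def Fn : ℝ → ℝ := fun s => GG s * Real.sin (π * s)
noncomputable def Fn1 : ℝ → ℝ := fun s => GG1 s * Real.sin (π * s) + π * GG s * Real.cos (π * s)
noncomputable def Fn2 : ℝ → ℝ := fun s =>
  GG2 s * Real.sin (π * s) + 2 * π * GG1 s * Real.cos (π * s) - π^2 * GG s * Real.sin (π * s)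

lemma hd_Fn {s : ℝ} (h1 : 0 < 1 + s) (h2 : 0 < 1 - s) : HasDerivAt Fn (Fn1 s) s := by
  have := (hd_GG h1 h2).mul (hd_sin s)
  refine this.congr_deriv ?_
  simp only [Fn1]; ring

lemma hd_Fn1 {s : ℝ} (h1 : 0 < 1 + s) (h2 : 0 < 1 - s) : HasDerivAt Fn1 (Fn2 s) s := by
  have := ((hd_GG1 h1 h2).mul (hd_sin s)).add (((hd_GG h1 h2).const_mul π).mul (hd_cos s))
  refine this.congr_deriv ?_
  simp only [Fn2]; ring

lemma hd_Fn2 : HasDerivAt Fn2 (3 * π * GG2 0 - π^3 * GG 0) 0 := by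
  have h1 : (0:ℝ) < 1 + 0 := by norm_num
  have h2 : (0:ℝ) < 1 - 0 := by norm_num
  have := ((diffAt_GG2.hasDerivAt.mul (hd_sin 0)).add
      ((((hd_GG1 h1 h2).const_mul (2*π))).mul (hd_cos 0))).sub
    (((hd_GG h1 h2).const_mul (π^2)).mul (hd_sin 0))
  refine this.congr_deriv ?_
  simp only [mul_zero, Real.sin_zero, Real.cos_zero]
  ring

lemma Fn_eq {s : ℝ} (hs : s ∈ Ioo (-(1:ℝ)/2) (1/2)) : Fn s = π * s := by
  obtain ⟨hl, hr⟩ := hs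
  rcases eq_or_ne s 0 with rfl | hne
  · simp [Fn]
  · have hsin : Real.sin (π * s) ≠ 0 := by
      have hb1 : -π < π * s := by nlinarith [pi_pos]
      have hb2 : π * s < π := by nlinarith [pi_pos]
      intro h
      rcases (Real.sin_eq_zero_iff_of_lt_of_lt hb1 hb2).mp h with h0
      exact hne (by simpa [pi_ne_zero] using h0)
    have hΓ : Real.Gamma (1 + s) = s * Real.Gamma s := by
      rw [add_comm]; exact Real.Gamma_add_one hne
    have href := Real.Gamma_mul_Gamma_one_sub s
    simp only [Fn, GG, hΓ]
    rw [show s * Real.Gamma s * Real.Gamma (1 - s) * Real.sin (π * s)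
        = s * (Real.Gamma s * Real.Gamma (1 - s)) * Real.sin (π * s) from by ring, href]
    have hsin' : Real.sin (s * π) ≠ 0 := by rwa [mul_comm]
    field_simp

lemma GG2_zero : GG2 0 = π^2/3 := by
  have hmem : Ioo (-(1:ℝ)/2) (1/2) ∈ nhds (0:ℝ) := Ioo_mem_nhds (by norm_num) (by norm_num)
  have hpos : ∀ s ∈ Ioo (-(1:ℝ)/2) (1/2), 0 < 1 + s ∧ 0 < 1 - s := by
    rintro s ⟨hl, hr⟩; constructor <;> linarith
  have hEv : Fn =ᶠ[nhds (0:ℝ)] fun s => π * s :=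
    Filter.eventually_of_mem hmem (fun s hs => Fn_eq hs)
  have hdF : deriv Fn =ᶠ[nhds (0:ℝ)] Fn1 :=
    Filter.eventually_of_mem hmem (fun s hs => ((hd_Fn (hpos s hs).1 (hpos s hs).2).deriv))
  have hlin : deriv (fun s : ℝ => π * s) = fun _ => π := by
    funext t; simpa using ((hasDerivAt_id t).const_mul π).deriv
  have h2 : Fn1 =ᶠ[nhds (0:ℝ)] fun _ => π := by
    refine hdF.symm.trans (hEv.deriv.trans ?_)
    rw [hlin]
  have h3 : deriv Fn1 =ᶠ[nhds (0:ℝ)] fun _ => (0:ℝ) := by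
    refine h2.deriv.trans ?_
    simp [deriv_const]
  have hdF1 : deriv Fn1 =ᶠ[nhds (0:ℝ)] Fn2 :=
    Filter.eventually_of_mem hmem (fun s hs => ((hd_Fn1 (hpos s hs).1 (hpos s hs).2).deriv))
  have h4 : Fn2 =ᶠ[nhds (0:ℝ)] fun _ => (0:ℝ) := hdF1.symm.trans h3
  have h5 : deriv Fn2 0 = 0 := by
    rw [h4.deriv_eq]; simp
  have h6 : deriv Fn2 0 = 3 * π * GG2 0 - π^3 * GG 0 := hd_Fn2.deriv
  have hGG0 : GG 0 = 1 := by simp [GG, Real.Gamma_one]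
  rw [h6, hGG0] at h5
  exact mul_left_cancel₀ pi_ne_zero (by linarith)

/-- `Γ''(1) − (Γ'(1))² = π²/6`. -/
theorem gamma_second_deriv_sub_sq_first_deriv_one :
    iteratedDeriv 2 Real.Gamma 1 - (iteratedDeriv 1 Real.Gamma 1) ^ 2 = π ^ 2 / 6 := by
  have hGG2 : GG2 0 = π^2/3 := GG2_zero
  have h1 : iteratedDeriv 1 Real.Gamma 1 = Ga 1 := by
    rw [iteratedDeriv_one]; rfl
  have h2 : iteratedDeriv 2 Real.Gamma 1 = Gb 1 := by
    rw [show (2:ℕ) = 1 + 1 from rfl, iteratedDeriv_succ, iteratedDeriv_one]; rfl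
  have : GG2 0 = 2 * Gb 1 - 2 * (Ga 1)^2 := by
    simp only [GG2, add_zero, sub_zero, Real.Gamma_one]
    ring
  rw [h1, h2]
  rw [this] at hGG2
  linarith
end

section
/- The third derivative of the real Gamma function at 1 equals −γ³ − (π²/2)·γ − 2ζ(3); that is, Γ^(3)(1) = −γ³ − 3·(π²/6)·γ − 2·ζ(3). -/
open Real Filter Topology Finset

namespace GTD

noncomputable def g1 (x : ℝ) : ℝ :=
  -Real.eulerMascheroniConstant + ∑' k : ℕ, (((k : ℝ) + 1)⁻¹ - (x + k)⁻¹)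

noncomputable def g2 (x : ℝ) : ℝ := ∑' k : ℕ, ((x + (k : ℝ)) ^ 2)⁻¹

noncomputable def g3 (x : ℝ) : ℝ := ∑' k : ℕ, (-2 * ((x + (k : ℝ)) ^ 3)⁻¹)

def S : Set ℝ := Set.Ioo (1/2) (3/2)

lemma isOpen_S : IsOpen S := isOpen_Ioo

lemma one_mem_S : (1:ℝ) ∈ S := by constructor <;> norm_num

lemma pos_add (x : ℝ) (hx : x ∈ S) (j : ℕ) : 0 < x + j := by
  have := hx.1; nlinarith [Nat.cast_nonneg (α := ℝ) j]

lemma half_add (x : ℝ) (hx : x ∈ S) (j : ℕ) : (j:ℝ) + 1 ≤ 2 * (x + j) := by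
  have := hx.1; nlinarith [Nat.cast_nonneg (α := ℝ) j]

noncomputable def F (n : ℕ) (x : ℝ) : ℝ :=
  x * Real.log n + Real.log (Nat.factorial n) - ∑ j ∈ range (n+1), Real.log (x + j)

noncomputable def F1 (n : ℕ) (x : ℝ) : ℝ :=
  Real.log n - ∑ j ∈ range (n+1), (x + (j:ℝ))⁻¹

noncomputable def F2 (n : ℕ) (x : ℝ) : ℝ := ∑ j ∈ range (n+1), ((x + (j:ℝ)) ^ 2)⁻¹

noncomputable def F3 (n : ℕ) (x : ℝ) : ℝ := ∑ j ∈ range (n+1), (-2 * ((x + (j:ℝ)) ^ 3)⁻¹)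

lemma hasDerivAt_F (n : ℕ) {x : ℝ} (hx : x ∈ S) : HasDerivAt (F n) (F1 n x) x := by
  have h1 : ∀ j ∈ range (n+1), HasDerivAt (fun y : ℝ => Real.log (y + j)) ((x + (j:ℝ))⁻¹) x := by
    intro j _
    have := ((hasDerivAt_id x).add_const (j:ℝ)).log (pos_add x hx j).ne'
    simpa using this
  have hsum := HasDerivAt.fun_sum h1
  have h2 : HasDerivAt (fun y : ℝ => y * Real.log n + Real.log (Nat.factorial n))
      (Real.log n) x := by
    simpa using ((hasDerivAt_id x).mul_const (Real.log n)).add_const (Real.log (Nat.factorial n))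
  exact h2.sub hsum

lemma hasDerivAt_F1 (n : ℕ) {x : ℝ} (hx : x ∈ S) : HasDerivAt (F1 n) (F2 n x) x := by
  have h1 : ∀ j ∈ range (n+1), HasDerivAt (fun y : ℝ => (y + (j:ℝ))⁻¹)
      (-((x + (j:ℝ)) ^ 2)⁻¹) x := by
    intro j _
    have := ((hasDerivAt_id x).add_const (j:ℝ)).fun_inv (pos_add x hx j).ne'
    simpa [neg_div, one_div] using this
  have hsum := HasDerivAt.fun_sum h1
  have h2 : HasDerivAt (fun y : ℝ => Real.log n - ∑ j ∈ range (n+1), (y + (j:ℝ))⁻¹)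
      (0 - ∑ j ∈ range (n+1), -((x + (j:ℝ)) ^ 2)⁻¹) x :=
    (hasDerivAt_const x _).sub hsum
  simp [F1, F2, Finset.sum_neg_distrib] at h2
  exact h2

lemma hasDerivAt_F2 (n : ℕ) {x : ℝ} (hx : x ∈ S) : HasDerivAt (F2 n) (F3 n x) x := by
  have h1 : ∀ j ∈ range (n+1), HasDerivAt (fun y : ℝ => ((y + (j:ℝ)) ^ 2)⁻¹)
      (-2 * ((x + (j:ℝ)) ^ 3)⁻¹) x := by
    intro j _
    have hp : (0:ℝ) < x + j := pos_add x hx j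
    have h0 : HasDerivAt (fun y : ℝ => ((y + (j:ℝ)) ^ 2)⁻¹) _ x :=
      (((hasDerivAt_id x).add_const (j:ℝ)).fun_pow 2).fun_inv (by positivity)
    simp only [id] at h0
    convert h0 using 1
    field_simp
    ring
  exact HasDerivAt.fun_sum h1

lemma TUO_succ {F : ℕ → ℝ → ℝ} {f : ℝ → ℝ} {s : Set ℝ}
    (h : TendstoUniformlyOn F f atTop s) :
    TendstoUniformlyOn (fun n => F (n+1)) f atTop s :=
  fun u hu => (tendsto_add_atTop_nat 1).eventually (h u hu)

lemma summable_aux (p : ℕ) (hp : 1 < p) : Summable (fun k : ℕ => (((k:ℝ)+1) ^ p)⁻¹) := by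
  have h := (Real.summable_one_div_nat_pow (p := p)).mpr hp
  have h2 := (summable_nat_add_iff 1).mpr h
  refine h2.congr fun k => ?_
  push_cast
  rw [one_div]

lemma hc : Tendsto (fun n : ℕ => Real.log n - ∑ j ∈ range (n+1), ((j:ℝ)+1)⁻¹) atTop
    (𝓝 (-Real.eulerMascheroniConstant)) := by
  have hh : ∀ n : ℕ, ((harmonic n : ℚ) : ℝ) = ∑ j ∈ range n, ((j:ℝ)+1)⁻¹ := by
    intro n
    rw [harmonic]
    push_cast
    rfl
  have t1 : Tendsto (fun n : ℕ => ((harmonic (n+1) : ℚ):ℝ) - Real.log ((n:ℝ)+1)) atTop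
      (𝓝 Real.eulerMascheroniConstant) := by
    have := Real.tendsto_harmonic_sub_log.comp (tendsto_add_atTop_nat 1)
    refine this.congr fun n => ?_
    simp [Function.comp]
  have t2 : Tendsto (fun n : ℕ => Real.log ((n:ℝ)+1) - Real.log n) atTop (𝓝 0) := by
    have h0 : Tendsto (fun n : ℕ => ((n:ℝ)+1)/n) atTop (𝓝 1) := by
      have := tendsto_one_div_atTop_nhds_zero_nat (𝕜 := ℝ)
      have h1 := tendsto_const_nhds (x := (1:ℝ)) (f := atTop (α := ℕ)) |>.add this
      rw [add_zero] at h1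
      refine h1.congr' ?_
      filter_upwards [eventually_ge_atTop 1] with n hn
      have : (n:ℝ) ≠ 0 := Nat.cast_ne_zero.mpr (by omega)
      field_simp
    have h2 : Tendsto (fun n : ℕ => Real.log (((n:ℝ)+1)/n)) atTop (𝓝 0) := by
      have := (Real.continuousAt_log one_ne_zero).tendsto.comp h0
      simpa [Function.comp_def] using this
    refine h2.congr' ?_
    filter_upwards [eventually_ge_atTop 1] with n hn
    have hn0 : (0:ℝ) < n := by exact_mod_cast Nat.pos_of_ne_zero (by omega)
    rw [Real.log_div (by positivity) (by positivity)]
  have := (t1.neg).sub t2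
  rw [show -Real.eulerMascheroniConstant - 0 = -Real.eulerMascheroniConstant by ring] at this
  refine this.congr fun n => ?_
  rw [hh]
  ring

lemma U2 : TendstoUniformlyOn F2 g2 atTop S := by
  refine TUO_succ (tendstoUniformlyOn_tsum_nat (u := fun k : ℕ => 4 * (((k:ℝ)+1) ^ 2)⁻¹)
    ((summable_aux 2 one_lt_two).mul_left 4) ?_)
  intro k x hx
  have hp := pos_add x hx k
  have hh := half_add x hx k
  rw [norm_inv, norm_pow, Real.norm_eq_abs, abs_of_pos hp]
  rw [inv_le_iff_one_le_mul₀ (by positivity)]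
  rw [show (4:ℝ) * (((k:ℝ)+1)^2)⁻¹ * (x+k)^2 = (2*(x+k))^2 / ((k:ℝ)+1)^2 by ring]
  rw [le_div_iff₀ (by positivity)]
  nlinarith

lemma U3 : TendstoUniformlyOn F3 g3 atTop S := by
  refine TUO_succ (tendstoUniformlyOn_tsum_nat (u := fun k : ℕ => 16 * (((k:ℝ)+1) ^ 3)⁻¹)
    ((summable_aux 3 (by norm_num)).mul_left 16) ?_)
  intro k x hx
  have hp := pos_add x hx k
  have hh := half_add x hx k
  show ‖(-2:ℝ) * ((x + (k:ℝ))^3)⁻¹‖ ≤ 16 * (((k:ℝ)+1) ^ 3)⁻¹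
  rw [norm_mul, norm_inv, norm_pow, Real.norm_eq_abs, Real.norm_eq_abs, abs_of_pos hp]
  rw [show |(-2:ℝ)| = 2 by simp]
  rw [show (16:ℝ) * (((k:ℝ)+1)^3)⁻¹ = 2 * (8 * (((k:ℝ)+1)^3)⁻¹) by ring]
  gcongr
  rw [inv_le_iff_one_le_mul₀ (by positivity)]
  rw [show (8:ℝ) * (((k:ℝ)+1)^3)⁻¹ * (x+k)^3 = (2*(x+k))^3 / ((k:ℝ)+1)^3 by ring]
  rw [le_div_iff₀ (by positivity)]
  have := pow_le_pow_left₀ (by positivity) hh 3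
  linarith

lemma U1sum : TendstoUniformlyOn (fun n x => ∑ j ∈ range (n+1), (((j:ℝ)+1)⁻¹ - (x + (j:ℝ))⁻¹))
    (fun x => ∑' k : ℕ, (((k:ℝ)+1)⁻¹ - (x + (k:ℝ))⁻¹)) atTop S := by
  refine TUO_succ (tendstoUniformlyOn_tsum_nat (u := fun k : ℕ => (((k:ℝ)+1) ^ 2)⁻¹)
    (summable_aux 2 one_lt_two) ?_)
  intro k x hx
  have hp := pos_add x hx k
  have hh := half_add x hx k
  have hk1 : (0:ℝ) < (k:ℝ) + 1 := by positivity
  obtain ⟨hx1, hx2⟩ := hx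
  have hxa : |x - 1| ≤ 1/2 := by
    rw [abs_le]; constructor <;> linarith
  show ‖((k:ℝ)+1)⁻¹ - (x + (k:ℝ))⁻¹‖ ≤ (((k:ℝ)+1) ^ 2)⁻¹
  rw [show ((k:ℝ)+1)⁻¹ - (x + (k:ℝ))⁻¹ = (x - 1) / (((k:ℝ)+1) * (x + (k:ℝ))) by
    field_simp; ring]
  rw [Real.norm_eq_abs, abs_div, abs_of_pos (mul_pos hk1 hp)]
  calc |x - 1| / (((k:ℝ)+1) * (x + (k:ℝ)))
      ≤ (1/2) / (((k:ℝ)+1) ^ 2 / 2) := by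
        apply div_le_div₀ (by norm_num) hxa (by positivity)
        nlinarith
    _ = (((k:ℝ)+1) ^ 2)⁻¹ := by field_simp

lemma U1 : TendstoUniformlyOn F1 g1 atTop S := by
  have hconst : TendstoUniformlyOn
      (fun (n : ℕ) (_ : ℝ) => Real.log n - ∑ j ∈ range (n+1), ((j:ℝ)+1)⁻¹)
      (fun _ => -Real.eulerMascheroniConstant) atTop S := by
    rw [Metric.tendstoUniformlyOn_iff]
    intro ε hε
    filter_upwards [Metric.tendsto_nhds.mp hc ε hε] with n hn x _
    rwa [dist_comm] at hn
  have h := hconst.add U1sum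
  have h2 : TendstoUniformlyOn
      (fun (n : ℕ) (x : ℝ) => (Real.log n - ∑ j ∈ range (n+1), ((j:ℝ)+1)⁻¹) +
        ∑ j ∈ range (n+1), (((j:ℝ)+1)⁻¹ - (x + (j:ℝ))⁻¹)) g1 atTop S := by
    refine h.congr_right fun x _ => ?_
    simp only [Pi.add_apply, g1]
  refine h2.congr ?_
  filter_upwards with n x _
  simp only [F1, Finset.sum_sub_distrib]
  ring

lemma tendsto_F {x : ℝ} (hx : x ∈ S) :
    Tendsto (fun n => F n x) atTop (𝓝 (Real.log (Real.Gamma x))) := by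
  have hx0 : 0 < x := lt_trans (by norm_num) hx.1
  have hΓ : 0 < Real.Gamma x := Real.Gamma_pos_of_pos hx0
  have h1 : Tendsto (fun n => Real.log (Real.GammaSeq x n)) atTop
      (𝓝 (Real.log (Real.Gamma x))) :=
    (Real.continuousAt_log hΓ.ne').tendsto.comp (Real.GammaSeq_tendsto_Gamma x)
  refine h1.congr' ?_
  filter_upwards [eventually_ge_atTop 1] with n hn
  have hn0 : (0:ℝ) < n := by exact_mod_cast Nat.pos_of_ne_zero (by omega)
  have hprod : ∀ j ∈ range (n+1), x + (j:ℝ) ≠ 0 := fun j _ => (pos_add x hx j).ne'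
  have hprodpos : 0 < ∏ j ∈ range (n+1), (x + (j:ℝ)) :=
    Finset.prod_pos fun j _ => pos_add x hx j
  rw [Real.GammaSeq, Real.log_div (by positivity) hprodpos.ne', Real.log_mul (by positivity)
    (by positivity), Real.log_rpow hn0, Real.log_prod hprod, F]

lemma hasDerivAt_logGamma {x : ℝ} (hx : x ∈ S) :
    HasDerivAt (fun y => Real.log (Real.Gamma y)) (g1 x) x :=
  hasDerivAt_of_tendstoUniformlyOn isOpen_S U1
    (Eventually.of_forall fun n y hy => hasDerivAt_F n hy)
    (fun y hy => tendsto_F hy) hx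

lemma hasDerivAt_g1 {x : ℝ} (hx : x ∈ S) : HasDerivAt g1 (g2 x) x :=
  hasDerivAt_of_tendstoUniformlyOn isOpen_S U2
    (Eventually.of_forall fun n y hy => hasDerivAt_F1 n hy)
    (fun y hy => U1.tendsto_at hy) hx

lemma hasDerivAt_g2 {x : ℝ} (hx : x ∈ S) : HasDerivAt g2 (g3 x) x :=
  hasDerivAt_of_tendstoUniformlyOn isOpen_S U3
    (Eventually.of_forall fun n y hy => hasDerivAt_F2 n hy)
    (fun y hy => U2.tendsto_at hy) hx

lemma g1_one : g1 1 = -Real.eulerMascheroniConstant := by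
  rw [g1]
  have : ∀ k : ℕ, (((k:ℝ)+1)⁻¹ - ((1:ℝ) + k)⁻¹) = 0 := fun k => by rw [add_comm]; ring
  simp [this]

lemma g2_one : g2 1 = π ^ 2 / 6 := by
  rw [g2]
  have h := (hasSum_nat_add_iff' (f := fun n : ℕ => (1:ℝ) / (n:ℝ) ^ 2) 1).mpr hasSum_zeta_two
  simp only [Finset.range_one, Finset.sum_singleton, Nat.cast_zero] at h
  norm_num at h
  rw [← h.tsum_eq]
  exact tsum_congr fun k => by rw [add_comm]

lemma g3_one : g3 1 = -2 * ∑' m : ℕ, (1 : ℝ) / ((m:ℝ) + 1) ^ 3 := by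
  rw [g3, tsum_mul_left]
  congr 1
  refine tsum_congr fun k => ?_
  rw [one_div, add_comm]

lemma hasDerivAt_Gamma {x : ℝ} (hx : x ∈ S) :
    HasDerivAt Real.Gamma (Real.Gamma x * g1 x) x := by
  have hx0 : 0 < x := lt_trans (by norm_num) hx.1
  have hΓ : 0 < Real.Gamma x := Real.Gamma_pos_of_pos hx0
  have h := (hasDerivAt_logGamma hx).exp
  rw [Real.exp_log hΓ] at h
  refine h.congr_of_eventuallyEq ?_
  filter_upwards [isOpen_S.mem_nhds hx] with y hy
  rw [Real.exp_log (Real.Gamma_pos_of_pos (lt_trans (by norm_num) hy.1))]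

lemma deriv_Gamma_eq {x : ℝ} (hx : x ∈ S) :
    deriv Real.Gamma x = Real.Gamma x * g1 x := (hasDerivAt_Gamma hx).deriv

lemma hasDerivAt_deriv_Gamma {x : ℝ} (hx : x ∈ S) :
    HasDerivAt (deriv Real.Gamma) (Real.Gamma x * (g1 x ^ 2 + g2 x)) x := by
  have h : HasDerivAt (fun y => Real.Gamma y * g1 y) _ x :=
    (hasDerivAt_Gamma hx).fun_mul (hasDerivAt_g1 hx)
  have h2 : HasDerivAt (fun y => Real.Gamma y * g1 y)
      (Real.Gamma x * (g1 x ^ 2 + g2 x)) x := by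
    convert h using 1
    all_goals ring
  refine h2.congr_of_eventuallyEq ?_
  filter_upwards [isOpen_S.mem_nhds hx] with y hy
  exact deriv_Gamma_eq hy

lemma hasDerivAt_deriv2_Gamma {x : ℝ} (hx : x ∈ S) :
    HasDerivAt (deriv (deriv Real.Gamma))
      (Real.Gamma x * g1 x * (g1 x ^ 2 + g2 x)
        + Real.Gamma x * (2 * g1 x * g2 x + g3 x)) x := by
  have hsq : HasDerivAt (fun y => g1 y ^ 2 + g2 y) (2 * g1 x * g2 x + g3 x) x := by
    have : HasDerivAt (fun y => g1 y ^ 2 + g2 y) _ x :=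
      ((hasDerivAt_g1 hx).fun_pow 2).fun_add (hasDerivAt_g2 hx)
    convert this using 1
    all_goals ring
  have h : HasDerivAt (fun y => Real.Gamma y * (g1 y ^ 2 + g2 y)) _ x :=
    (hasDerivAt_Gamma hx).fun_mul hsq
  have h2 : HasDerivAt (fun y => Real.Gamma y * (g1 y ^ 2 + g2 y))
      (Real.Gamma x * g1 x * (g1 x ^ 2 + g2 x)
        + Real.Gamma x * (2 * g1 x * g2 x + g3 x)) x := by
    convert h using 1
    all_goals ring
  refine h2.congr_of_eventuallyEq ?_
  filter_upwards [isOpen_S.mem_nhds hx] with y hy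
  exact (hasDerivAt_deriv_Gamma hy).deriv

end GTD

/-- `Γ'''(1) = −γ³ − 3·(π²/6)·γ − 2·ζ(3)`, where `ζ(3) = ∑_{m=1}^∞ m⁻³`. -/
theorem gamma_third_deriv_one :
    iteratedDeriv 3 Real.Gamma 1 =
      -Real.eulerMascheroniConstant ^ 3
        - 3 * (π ^ 2 / 6) * Real.eulerMascheroniConstant
        - 2 * ∑' m : ℕ, (1 : ℝ) / (m + 1) ^ 3 := by
  have h3 := (GTD.hasDerivAt_deriv2_Gamma GTD.one_mem_S).deriv
  rw [iteratedDeriv_succ,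
    iteratedDeriv_succ, iteratedDeriv_one]
  rw [h3, Real.Gamma_one, GTD.g1_one, GTD.g2_one, GTD.g3_one]
  push_cast
  ring
end
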